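/- arXiv:1010.3367 — 8 statements merged into one kernel-verified Lean document; each statement's English description precedes it below -/
import Mathlib

section
/- Let G be a finite simple graph that admits an orientation of its edges in which every vertex has indegree at most d, and suppose the maximum degree satisfies Δ(G) ≥ 2d. Then the spectral radius of G satisfies ρ(G) ≤ 2·√(d·(Δ(G) − d)). -/
noncomputable def specRad {V : Type*} [Fintype V] [DecidableEq V] (G : SimpleGraph V) : ℝ := by
  classical exact sSup (spectrum ℝ (G.adjMatrix ℝ))

noncomputable def maxDeg {V : Type*} [Fintype V] (G : SimpleGraph V) : ℕ := by
  classical exact G.maxDegree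

noncomputable def deg {V : Type*} [Fintype V] (G : SimpleGraph V) (v : V) : ℕ := by
  classical exact G.degree v

private lemma amgm_aux {t a c : ℝ} (ht : 0 < t) : 2 * a * c ≤ a ^ 2 / t + t * c ^ 2 := by
  have h2 : (2 * a * c) * t ≤ (a ^ 2 / t + t * c ^ 2) * t := by
    rw [add_mul, div_mul_cancel₀ _ ht.ne']
    nlinarith [sq_nonneg (a - t * c)]
  exact le_of_mul_le_mul_right h2 ht

/-- A finite simple graph admitting an orientation with all indegrees at most d,
whose maximum degree is at least 2d, has spectral radius at most 2√(d(Δ−d)). -/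
theorem stmt0 {V : Type*} [Fintype V] [DecidableEq V] (d : ℕ) (G : SimpleGraph V)
    (f : Sym2 V → V) (hf : ∀ e ∈ G.edgeSet, f e ∈ e)
    (hind : ∀ v : V, ({e | e ∈ G.edgeSet ∧ f e = v} : Set (Sym2 V)).ncard ≤ d)
    (hΔ : 2 * d ≤ maxDeg G) :
    specRad G ≤ 2 * Real.sqrt (d * ((maxDeg G : ℝ) - d)) := by
  classical
  have hrhs : (0:ℝ) ≤ 2 * Real.sqrt (d * ((maxDeg G : ℝ) - d)) := by positivity
  unfold specRad
  refine Real.sSup_le ?_ hrhs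
  intro μ hμ
  -- extract an eigenvector
  rw [← AlgEquiv.spectrum_eq (Matrix.toLinAlgEquiv' (n := V) (R := ℝ))] at hμ
  obtain ⟨x, hx⟩ := (Module.End.HasEigenvalue.of_mem_spectrum hμ).exists_hasEigenvector
  have hxe : ∀ v, ∑ u ∈ G.neighborFinset v, x u = μ * x v := by
    intro v
    have h1 := hx.apply_eq_smul
    have h2 : (Matrix.mulVec (G.adjMatrix ℝ) x) v = (μ • x) v := by
      rw [← Matrix.toLinAlgEquiv'_apply, h1]
    simpa [SimpleGraph.adjMatrix_mulVec_apply] using h2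
  have hx0 : x ≠ 0 := hx.right
  -- orientation matrix
  set b : V → V → ℝ := fun u v => if G.Adj u v ∧ f s(u, v) = v then 1 else 0 with hb
  have hb01 : ∀ u v, 0 ≤ b u v := by
    intro u v; rw [hb]; dsimp only; split <;> norm_num
  have hsplit : ∀ u v, (if G.Adj u v then (1:ℝ) else 0) = b u v + b v u := by
    intro u v
    by_cases h : G.Adj u v
    · have hm : f s(u, v) ∈ s(u, v) := hf _ ((SimpleGraph.mem_edgeSet G).mpr h)
      rw [Sym2.mem_iff] at hm
      have hne : u ≠ v := h.ne
      have hvu : s(v, u) = s(u, v) := Sym2.eq_swap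
      rcases hm with hu | hv
      · have h1 : b u v = 0 := by
          rw [hb]; dsimp only
          rw [if_neg]; rintro ⟨-, h2⟩; exact hne (hu ▸ h2.symm ▸ rfl)
        have h2 : b v u = 1 := by
          rw [hb]; dsimp only
          rw [if_pos ⟨h.symm, by rw [hvu]; exact hu⟩]
        rw [if_pos h, h1, h2]; ring
      · have h1 : b u v = 1 := by rw [hb]; dsimp only; rw [if_pos ⟨h, hv⟩]
        have h2 : b v u = 0 := by
          rw [hb]; dsimp only
          rw [if_neg]; rintro ⟨-, h2⟩; rw [hvu] at h2; exact hne (hv ▸ h2.symm ▸ rfl)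
        rw [if_pos h, h1, h2]; ring
    · have h1 : b u v = 0 := by
        rw [hb]; dsimp only; rw [if_neg]; rintro ⟨h2, -⟩; exact h h2
      have h2 : b v u = 0 := by
        rw [hb]; dsimp only; rw [if_neg]; rintro ⟨h2, -⟩; exact h h2.symm
      rw [if_neg h, h1, h2]; ring
  -- column sums bounded by d
  have hcol : ∀ v, (∑ u, b u v) ≤ (d : ℝ) := by
    intro v
    have hcast : (∑ u, b u v)
        = ((Finset.univ.filter fun u => G.Adj u v ∧ f s(u, v) = v).card : ℝ) := by
      rw [← Finset.sum_boole]
    have hcard : (Finset.univ.filter fun u => G.Adj u v ∧ f s(u, v) = v).card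
        = ({e | e ∈ G.edgeSet ∧ f e = v} : Set (Sym2 V)).ncard := by
      rw [Set.ncard_eq_toFinset_card']
      apply Finset.card_bij (fun u _ => s(u, v))
      · intro u hu
        simp only [Finset.mem_filter, Finset.mem_univ, true_and] at hu
        simp only [Set.mem_toFinset, Set.mem_setOf_eq, SimpleGraph.mem_edgeSet]
        exact ⟨hu.1, hu.2⟩
      · intro u1 _ u2 _ he
        exact Sym2.congr_left.mp he
      · intro e he
        simp only [Set.mem_toFinset, Set.mem_setOf_eq] at he
        obtain ⟨he1, he2⟩ := he
        have hv : v ∈ e := he2 ▸ hf e he1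
        have hes : s(Sym2.Mem.other hv, v) = e := by
          rw [Sym2.eq_swap]; exact Sym2.other_spec hv
        refine ⟨Sym2.Mem.other hv, ?_, hes⟩
        simp only [Finset.mem_filter, Finset.mem_univ, true_and]
        constructor
        · rw [← SimpleGraph.mem_edgeSet, hes]; exact he1
        · rw [hes]; exact he2
    rw [hcast, hcard]
    exact_mod_cast hind v
  have hcol0 : ∀ v, 0 ≤ ∑ u, b u v := fun v => Finset.sum_nonneg fun u _ => hb01 u v
  -- norms and weighted sums
  set S := ∑ v, x v ^ 2 with hS
  have hS0 : 0 < S := by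
    obtain ⟨v, hv⟩ := Function.ne_iff.mp hx0
    exact Finset.sum_pos' (fun i _ => sq_nonneg _)
      ⟨v, Finset.mem_univ v, lt_of_le_of_ne (sq_nonneg _) (Ne.symm (pow_ne_zero 2 hv))⟩
  set s := ∑ v, (∑ u, b u v) * x v ^ 2 with hsdef
  have hs0 : 0 ≤ s :=
    Finset.sum_nonneg fun v _ => mul_nonneg (hcol0 v) (sq_nonneg _)
  have hsd : s ≤ (d : ℝ) * S := by
    rw [hsdef, hS, Finset.mul_sum]
    exact Finset.sum_le_sum fun v _ => mul_le_mul_of_nonneg_right (hcol v) (sq_nonneg _)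
  -- Rayleigh identity
  have hray : μ * S = 2 * ∑ u, ∑ v, b u v * (x u * x v) := by
    have h1 : μ * S = ∑ v, ∑ u, (if G.Adj v u then (1:ℝ) else 0) * (x u * x v) := by
      rw [hS, Finset.mul_sum]
      refine Finset.sum_congr rfl fun v _ => ?_
      calc μ * x v ^ 2 = (∑ u ∈ G.neighborFinset v, x u) * x v := by rw [hxe v]; ring
        _ = ∑ u ∈ Finset.univ.filter (G.Adj v), x u * x v := by
            rw [SimpleGraph.neighborFinset_eq_filter, Finset.sum_mul]
        _ = ∑ u, (if G.Adj v u then (1:ℝ) else 0) * (x u * x v) := by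
            rw [Finset.sum_filter]
            exact Finset.sum_congr rfl fun u _ => by by_cases h : G.Adj v u <;> simp [h]
    rw [h1]
    have h2 : ∑ v, ∑ u, (if G.Adj v u then (1:ℝ) else 0) * (x u * x v)
        = (∑ v, ∑ u, b v u * (x u * x v)) + ∑ v, ∑ u, b u v * (x u * x v) := by
      rw [← Finset.sum_add_distrib]
      refine Finset.sum_congr rfl fun v _ => ?_
      rw [← Finset.sum_add_distrib]
      exact Finset.sum_congr rfl fun u _ => by rw [hsplit v u]; ring
    have h3 : (∑ v, ∑ u, b v u * (x u * x v)) = ∑ u, ∑ v, b u v * (x u * x v) :=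
      Finset.sum_congr rfl fun u _ => Finset.sum_congr rfl fun v _ => by ring
    have h4 : (∑ v, ∑ u, b u v * (x u * x v)) = ∑ u, ∑ v, b u v * (x u * x v) :=
      Finset.sum_comm
    rw [h2, h3, h4]; ring
  -- degree identity
  have hdeg : ∀ u, (∑ v, b u v) + (∑ v, b v u) = (G.degree u : ℝ) := by
    intro u
    rw [← Finset.sum_add_distrib]
    have h1 : ∑ v, (b u v + b v u) = ∑ v, (if G.Adj u v then (1:ℝ) else 0) :=
      Finset.sum_congr rfl fun v _ => (hsplit u v).symm
    rw [h1, Finset.sum_boole]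
    congr 1
    simp [SimpleGraph.degree, SimpleGraph.neighborFinset_eq_filter]
  have hdegΔ : ∀ u, (G.degree u : ℝ) ≤ (maxDeg G : ℝ) := by
    intro u
    have := SimpleGraph.degree_le_maxDegree G u
    unfold maxDeg
    exact_mod_cast this
  -- main case split
  rcases Nat.eq_zero_or_pos d with hd0 | hdpos
  · -- d = 0 : b vanishes, so μ = 0
    have hb0 : ∀ u v, b u v = 0 := by
      intro u v
      have h1 : ∑ u, b u v = 0 :=
        le_antisymm (by simpa [hd0] using hcol v) (hcol0 v)
      exact (Finset.sum_eq_zero_iff_of_nonneg (fun u _ => hb01 u v)).mp h1 u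
        (Finset.mem_univ u)
    have hμS : μ * S = 0 := by
      rw [hray]
      have : ∀ u ∈ Finset.univ, (∑ v, b u v * (x u * x v)) = 0 := fun u _ =>
        Finset.sum_eq_zero fun v _ => by rw [hb0 u v]; ring
      rw [Finset.sum_eq_zero this]; ring
    have hμ0 : μ = 0 := by
      rcases mul_eq_zero.mp hμS with h | h
      · exact h
      · exact absurd h hS0.ne'
    rw [hμ0]; exact hrhs
  · -- d ≥ 1
    set Δ : ℝ := (maxDeg G : ℝ) with hΔdef
    have hdr : (0:ℝ) < d := by exact_mod_cast hdpos
    have h2d : 2 * (d:ℝ) ≤ Δ := by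
      rw [hΔdef]; exact_mod_cast hΔ
    have hΔd : (d:ℝ) ≤ Δ - d := by linarith
    set t := Real.sqrt ((Δ - d) / d) with htdef
    have htq : (0:ℝ) < (Δ - d) / d := div_pos (by linarith) hdr
    have ht : 0 < t := Real.sqrt_pos.mpr htq
    have ht2 : t ^ 2 = (Δ - d) / d := Real.sq_sqrt htq.le
    set c := Real.sqrt ((d:ℝ) * (Δ - d)) with hcdef
    have hct : c * t = Δ - d := by
      rw [hcdef, htdef, ← Real.sqrt_mul (mul_nonneg hdr.le (by linarith))]
      have : (d:ℝ) * (Δ - d) * ((Δ - d) / d) = (Δ - d) ^ 2 := by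
        field_simp
      rw [this, Real.sqrt_sq (by linarith)]
    -- key inequality chain
    have hstep : μ * S ≤ (Δ * S - s) / t + t * s := by
      rw [hray]
      have h5 : (2:ℝ) * ∑ u, ∑ v, b u v * (x u * x v)
          = ∑ u, ∑ v, b u v * (2 * x u * x v) := by
        rw [Finset.mul_sum]
        refine Finset.sum_congr rfl fun u _ => ?_
        rw [Finset.mul_sum]
        exact Finset.sum_congr rfl fun v _ => by ring
      rw [h5]
      have h6 : ∑ u, ∑ v, b u v * (2 * x u * x v)
          ≤ ∑ u, ∑ v, b u v * (x u ^ 2 / t + t * x v ^ 2) :=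
        Finset.sum_le_sum fun u _ => Finset.sum_le_sum fun v _ =>
          mul_le_mul_of_nonneg_left (amgm_aux ht) (hb01 u v)
      refine h6.trans ?_
      have h7 : ∑ u, ∑ v, b u v * (x u ^ 2 / t + t * x v ^ 2)
          = (∑ u, (∑ v, b u v) * x u ^ 2) / t + t * s := by
        have h8 : ∀ u, ∑ v, b u v * (x u ^ 2 / t + t * x v ^ 2)
            = (∑ v, b u v) * x u ^ 2 / t + ∑ v, t * (b u v * x v ^ 2) := by
          intro u
          rw [Finset.sum_mul, Finset.sum_div, ← Finset.sum_add_distrib]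
          exact Finset.sum_congr rfl fun v _ => by ring
        rw [Finset.sum_congr rfl fun u _ => h8 u, Finset.sum_add_distrib,
          ← Finset.sum_div]
        congr 1
        rw [Finset.sum_comm, hsdef, Finset.mul_sum]
        exact Finset.sum_congr rfl fun v _ => by
          rw [← Finset.mul_sum, ← Finset.sum_mul]
      rw [h7]
      have h9 : (∑ u, (∑ v, b u v) * x u ^ 2) ≤ Δ * S - s := by
        have h10 : ∀ u, (∑ v, b u v) * x u ^ 2
            = (G.degree u : ℝ) * x u ^ 2 - (∑ v, b v u) * x u ^ 2 := by
          intro u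
          have := hdeg u
          nlinarith [hdeg u]
        rw [Finset.sum_congr rfl fun u _ => h10 u, Finset.sum_sub_distrib]
        have h11 : (∑ u, (∑ v, b v u) * x u ^ 2) = s := rfl
        rw [h11]
        have h12 : (∑ u, (G.degree u : ℝ) * x u ^ 2) ≤ Δ * S := by
          rw [hS, Finset.mul_sum]
          exact Finset.sum_le_sum fun u _ =>
            mul_le_mul_of_nonneg_right (hdegΔ u) (sq_nonneg _)
        linarith
      have hdiv : (∑ u, (∑ v, b u v) * x u ^ 2) / t ≤ (Δ * S - s) / t :=
        (div_le_div_iff_of_pos_right ht).mpr h9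
      linarith
    -- final algebra
    have hfin : (Δ * S - s) / t + t * s ≤ 2 * c * S := by
      rw [div_add' _ _ _ ht.ne', div_le_iff₀ ht]
      have htt : t * s * t = (Δ - d) / d * s := by
        rw [show t * s * t = t ^ 2 * s from by ring, ht2]
      rw [htt]
      have hq : (Δ - d) / d * s * d = (Δ - d) * s := by field_simp
      have hcs : 2 * c * S * t = 2 * (Δ - d) * S := by
        rw [show 2 * c * S * t = 2 * (c * t) * S from by ring, hct]
      rw [hcs]
      nlinarith [hq, mul_nonneg (by linarith : (0:ℝ) ≤ Δ - 2 * d)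
        (by linarith : (0:ℝ) ≤ (d:ℝ) * S - s), hdr]
    have : μ * S ≤ (2 * c) * S := by
      calc μ * S ≤ (Δ * S - s) / t + t * s := hstep
        _ ≤ 2 * c * S := hfin
    have := le_of_mul_le_mul_right this hS0
    rw [hcdef] at this
    exact this
end

section
/- Every d-degenerate finite simple graph G is spectrally 4d-degenerate; that is, every subgraph H of G satisfies ρ(H) ≤ √(4d·Δ(H)). -/
/-- G is spectrally d-degenerate: every subgraph H of G has ρ(H) ≤ √(d·Δ(H)). -/
def SpecDegen {V : Type*} [Fintype V] [DecidableEq V] (d : ℝ) (G : SimpleGraph V) : Prop :=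
  ∀ H : SimpleGraph V, H ≤ G → specRad H ≤ Real.sqrt (d * maxDeg H)

/-- A graph is d-degenerate: every subgraph has a vertex of degree at most d. -/
def Degen {V : Type*} (d : ℕ) (G : SimpleGraph V) : Prop :=
  ∀ s : Finset V, s.Nonempty → ∃ v ∈ s, ({u | u ∈ s ∧ G.Adj v u} : Set V).ncard ≤ d

open Finset in
lemma degen_order {V : Type*} [DecidableEq V] (d : ℕ) (G : SimpleGraph V)
    [DecidableRel G.Adj] (hG : Degen d G)
    (s : Finset V) : ∃ f : V → ℕ, Set.InjOn f s ∧
      ∀ v ∈ s, (s.filter (fun u => G.Adj v u ∧ f u < f v)).card ≤ d := by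
  induction s using Finset.strongInduction with
  | _ s ih =>
    rcases s.eq_empty_or_nonempty with rfl | hne
    · exact ⟨fun _ => 0, by simp, by simp⟩
    obtain ⟨v, hv, hvd⟩ := hG s hne
    have hvd' : (s.filter (fun u => G.Adj v u)).card ≤ d := by
      have : ({u | u ∈ s ∧ G.Adj v u} : Set V) = ↑(s.filter (fun u => G.Adj v u)) := by
        ext u; simp
      rwa [this, Set.ncard_coe_finset] at hvd
    obtain ⟨f, hinj, hdeg⟩ := ih (s.erase v) (Finset.erase_ssubset hv)
    set M := (s.erase v).sup f with hM
    refine ⟨fun u => if u = v then M + 1 else f u, ?_, ?_⟩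
    · intro a ha b hb hab
      simp only at hab
      by_cases hav : a = v <;> by_cases hbv : b = v
      · rw [hav, hbv]
      · exfalso
        rw [if_pos hav, if_neg hbv] at hab
        have : f b ≤ M := Finset.le_sup (Finset.mem_erase.mpr ⟨hbv, hb⟩)
        omega
      · exfalso
        rw [if_neg hav, if_pos hbv] at hab
        have : f a ≤ M := Finset.le_sup (Finset.mem_erase.mpr ⟨hav, ha⟩)
        omega
      · rw [if_neg hav, if_neg hbv] at hab
        exact hinj (Finset.mem_coe.mpr (Finset.mem_erase.mpr ⟨hav, ha⟩))
          (Finset.mem_coe.mpr (Finset.mem_erase.mpr ⟨hbv, hb⟩)) hab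
    · intro u hu
      by_cases huv : u = v
      · subst huv
        refine le_trans (Finset.card_le_card ?_) hvd'
        intro w hw
        simp only [Finset.mem_filter] at hw ⊢
        exact ⟨hw.1, hw.2.1⟩
      · refine le_trans (Finset.card_le_card ?_) (hdeg u (Finset.mem_erase.mpr ⟨huv, hu⟩))
        intro w hw
        simp only [Finset.mem_filter, if_neg huv] at hw
        have hfu : f u ≤ M := Finset.le_sup (Finset.mem_erase.mpr ⟨huv, hu⟩)
        by_cases hwv : w = v
        · exfalso; rw [if_pos hwv] at hw; omega
        · rw [if_neg hwv] at hw
          simp only [Finset.mem_filter, Finset.mem_erase]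
          exact ⟨⟨hwv, hw.1⟩, hw.2⟩

lemma eig_exists {V : Type*} [Fintype V] [DecidableEq V] (A : Matrix V V ℝ) (lam : ℝ)
    (h : lam ∈ spectrum ℝ A) : ∃ x : V → ℝ, x ≠ 0 ∧ A.mulVec x = lam • x := by
  have h1 : ¬ IsUnit ((algebraMap ℝ (Matrix V V ℝ)) lam - A) := spectrum.mem_iff.mp h
  rw [Matrix.isUnit_iff_isUnit_det, isUnit_iff_ne_zero, not_not] at h1
  obtain ⟨x, hx0, hx⟩ := (Matrix.exists_mulVec_eq_zero_iff).mpr h1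
  refine ⟨x, hx0, ?_⟩
  have := hx
  rw [Matrix.sub_mulVec] at this
  have h2 : (algebraMap ℝ (Matrix V V ℝ)) lam = lam • (1 : Matrix V V ℝ) := by
    rw [Algebra.algebraMap_eq_smul_one]
  rw [h2, Matrix.smul_mulVec, Matrix.one_mulVec, sub_eq_zero] at this
  exact this.symm

open Finset in
lemma main_est {V : Type*} [Fintype V] [DecidableEq V] (H : SimpleGraph V)
    [DecidableRel H.Adj] (d : ℕ) (f : V → ℕ) (hinj : Function.Injective f)
    (hback : ∀ v, (univ.filter (fun u => H.Adj v u ∧ f u < f v)).card ≤ d)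
    (y : V → ℝ) (_hy : ∀ u, 0 ≤ y u) :
    ∑ u, ∑ w, (if H.Adj u w then y u * y w else 0)
      ≤ 2 * Real.sqrt ((d : ℝ) * (H.maxDegree : ℝ)) * ∑ u, y u ^ 2 := by
  set S := ∑ u, y u ^ 2 with hSdef
  have hS : 0 ≤ S := Finset.sum_nonneg fun u _ => sq_nonneg _
  set T := (univ ×ˢ univ : Finset (V × V)).filter (fun p => H.Adj p.1 p.2 ∧ f p.1 < f p.2)
    with hTdef
  set T₁ := ∑ p ∈ T, y p.1 * y p.2 with hT1def
  have stepA : ∑ u, ∑ w, (if H.Adj u w then y u * y w else 0) = 2 * T₁ := by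
    have hsplit : ∀ u w : V, (if H.Adj u w then y u * y w else 0) =
        (if H.Adj u w ∧ f u < f w then y u * y w else 0) +
        (if H.Adj u w ∧ f w < f u then y u * y w else 0) := by
      intro u w
      by_cases h : H.Adj u w
      · have hne : f u ≠ f w := fun hfe => h.ne (hinj hfe)
        rcases lt_or_gt_of_ne hne with hlt | hgt
        · simp [h, hlt, not_lt.mpr hlt.le]
        · simp [h, hgt, not_lt.mpr hgt.le]
      · simp [h]
    have e1 : T₁ = ∑ u, ∑ w, (if H.Adj u w ∧ f u < f w then y u * y w else 0) := by
      rw [hT1def, hTdef, Finset.sum_filter, Finset.sum_product]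
    have e2 : ∑ u, ∑ w, (if H.Adj u w ∧ f w < f u then y u * y w else 0) = T₁ := by
      rw [Finset.sum_comm, e1]
      refine Finset.sum_congr rfl fun w _ => Finset.sum_congr rfl fun u _ => ?_
      by_cases h : H.Adj u w ∧ f w < f u
      · rw [if_pos h, if_pos ⟨(H.adj_comm u w).mp h.1, h.2⟩, mul_comm]
      · rw [if_neg h, if_neg (fun hc => h ⟨(H.adj_comm w u).mp hc.1, hc.2⟩)]
    calc ∑ u, ∑ w, (if H.Adj u w then y u * y w else 0)
        = ∑ u, ∑ w, ((if H.Adj u w ∧ f u < f w then y u * y w else 0) +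
            (if H.Adj u w ∧ f w < f u then y u * y w else 0)) := by
          exact Finset.sum_congr rfl fun u _ => Finset.sum_congr rfl fun w _ => hsplit u w
      _ = T₁ + T₁ := by simp_rw [Finset.sum_add_distrib]; rw [← e1, e2]
      _ = 2 * T₁ := by ring
  have stepC : ∑ p ∈ T, y p.1 ^ 2 ≤ (H.maxDegree : ℝ) * S := by
    rw [hTdef, Finset.sum_filter, Finset.sum_product]
    have : ∀ u : V, ∑ w, (if H.Adj u w ∧ f u < f w then y u ^ 2 else 0)
        ≤ y u ^ 2 * (H.maxDegree : ℝ) := by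
      intro u
      have hcard : (univ.filter (fun w => H.Adj u w ∧ f u < f w)).card ≤ H.maxDegree := by
        refine le_trans (Finset.card_le_card ?_) (H.degree_le_maxDegree u)
        intro w hw
        simp only [Finset.mem_filter] at hw
        exact (H.mem_neighborFinset u w).mpr hw.2.1
      calc ∑ w, (if H.Adj u w ∧ f u < f w then y u ^ 2 else 0)
          = y u ^ 2 * (univ.filter (fun w => H.Adj u w ∧ f u < f w)).card := by
            rw [← Finset.sum_filter, Finset.sum_const, nsmul_eq_mul, mul_comm]
        _ ≤ y u ^ 2 * (H.maxDegree : ℝ) := by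
            apply mul_le_mul_of_nonneg_left _ (sq_nonneg _)
            exact_mod_cast hcard
    calc ∑ u, ∑ w, (if H.Adj u w ∧ f u < f w then y u ^ 2 else 0)
        ≤ ∑ u, y u ^ 2 * (H.maxDegree : ℝ) := Finset.sum_le_sum fun u _ => this u
      _ = (H.maxDegree : ℝ) * S := by rw [← Finset.sum_mul, mul_comm]
  have stepD : ∑ p ∈ T, y p.2 ^ 2 ≤ (d : ℝ) * S := by
    rw [hTdef, Finset.sum_filter, Finset.sum_product]
    rw [Finset.sum_comm]
    have : ∀ w : V, ∑ u, (if H.Adj u w ∧ f u < f w then y w ^ 2 else 0)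
        ≤ y w ^ 2 * (d : ℝ) := by
      intro w
      have hcard : (univ.filter (fun u => H.Adj u w ∧ f u < f w)).card ≤ d := by
        refine le_trans (Finset.card_le_card ?_) (hback w)
        intro u hu
        simp only [Finset.mem_filter] at hu ⊢
        exact ⟨hu.1, (H.adj_comm u w).mp hu.2.1, hu.2.2⟩
      calc ∑ u, (if H.Adj u w ∧ f u < f w then y w ^ 2 else 0)
          = y w ^ 2 * (univ.filter (fun u => H.Adj u w ∧ f u < f w)).card := by
            rw [← Finset.sum_filter, Finset.sum_const, nsmul_eq_mul, mul_comm]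
        _ ≤ y w ^ 2 * (d : ℝ) := by
            apply mul_le_mul_of_nonneg_left _ (sq_nonneg _)
            exact_mod_cast hcard
    calc ∑ w, ∑ u, (if H.Adj u w ∧ f u < f w then y w ^ 2 else 0)
        ≤ ∑ w, y w ^ 2 * (d : ℝ) := Finset.sum_le_sum fun w _ => this w
      _ = (d : ℝ) * S := by rw [← Finset.sum_mul, mul_comm]
  have stepB : T₁ ≤ Real.sqrt ((d : ℝ) * (H.maxDegree : ℝ)) * S := by
    calc T₁ ≤ Real.sqrt (∑ p ∈ T, y p.1 ^ 2) * Real.sqrt (∑ p ∈ T, y p.2 ^ 2) :=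
          Real.sum_mul_le_sqrt_mul_sqrt T (fun p => y p.1) (fun p => y p.2)
      _ ≤ Real.sqrt ((H.maxDegree : ℝ) * S) * Real.sqrt ((d : ℝ) * S) := by
          apply mul_le_mul (Real.sqrt_le_sqrt stepC) (Real.sqrt_le_sqrt stepD)
            (Real.sqrt_nonneg _) (Real.sqrt_nonneg _)
      _ = Real.sqrt ((d : ℝ) * (H.maxDegree : ℝ)) * S := by
          rw [← Real.sqrt_mul (by positivity),
            show ((H.maxDegree : ℝ) * S * ((d : ℝ) * S)) =
              ((d : ℝ) * (H.maxDegree : ℝ)) * (S * S) by ring,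
            Real.sqrt_mul (by positivity), Real.sqrt_mul_self hS]
  rw [stepA]
  calc 2 * T₁ ≤ 2 * (Real.sqrt ((d : ℝ) * (H.maxDegree : ℝ)) * S) := by linarith
    _ = 2 * Real.sqrt ((d : ℝ) * (H.maxDegree : ℝ)) * S := by ring

/-- Every d-degenerate finite simple graph is spectrally 4d-degenerate. -/
theorem stmt1 {V : Type*} [Fintype V] [DecidableEq V] (d : ℕ) (G : SimpleGraph V)
    (hG : Degen d G) :
    SpecDegen (4 * (d : ℝ)) G := by
  classical
  intro H hle
  have hmd : maxDeg H = H.maxDegree := rfl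
  have hgoal : specRad H = sSup (spectrum ℝ (H.adjMatrix ℝ)) := rfl
  rw [hgoal, hmd]
  apply Real.sSup_le _ (Real.sqrt_nonneg _)
  intro lam hlam
  obtain ⟨x, hx0, hx⟩ := eig_exists (H.adjMatrix ℝ) lam hlam
  obtain ⟨f, hinjOn, hdegG⟩ := degen_order d G hG Finset.univ
  have hinj : Function.Injective f := fun a b h =>
    hinjOn (by simp) (by simp) h
  have hback : ∀ v, (Finset.univ.filter (fun u => H.Adj v u ∧ f u < f v)).card ≤ d := by
    intro v
    refine le_trans (Finset.card_le_card ?_) (hdegG v (Finset.mem_univ v))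
    intro u hu
    simp only [Finset.mem_filter] at hu ⊢
    exact ⟨hu.1, hle hu.2.1, hu.2.2⟩
  set y : V → ℝ := fun u => |x u| with hy
  set S := ∑ u, x u ^ 2 with hSdef
  have hSy : ∑ u, y u ^ 2 = S := by simp [hy, sq_abs, hSdef]
  obtain ⟨u0, hu0⟩ : ∃ u, x u ≠ 0 := by
    by_contra h; push_neg at h; exact hx0 (funext h)
  have hSpos : 0 < S :=
    Finset.sum_pos' (fun i _ => sq_nonneg _) ⟨u0, Finset.mem_univ u0, by positivity⟩
  have hls : lam * S = ∑ u, ∑ w, (H.adjMatrix ℝ) u w * (x u * x w) := by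
    have h1 : ∑ u, x u * ((H.adjMatrix ℝ).mulVec x) u = lam * S := by
      rw [hx]
      simp only [Pi.smul_apply, smul_eq_mul, hSdef]
      rw [Finset.mul_sum]
      exact Finset.sum_congr rfl fun u _ => by ring
    rw [← h1]
    refine Finset.sum_congr rfl fun u _ => ?_
    simp only [Matrix.mulVec, dotProduct, Finset.mul_sum]
    exact Finset.sum_congr rfl fun w _ => by ring
  have hterm : ∀ u w : V, (H.adjMatrix ℝ) u w * (x u * x w)
      ≤ (if H.Adj u w then y u * y w else 0) := by
    intro u w
    by_cases h : H.Adj u w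
    · rw [if_pos h, SimpleGraph.adjMatrix_apply, if_pos h, one_mul, hy]
      calc x u * x w ≤ |x u * x w| := le_abs_self _
        _ = |x u| * |x w| := abs_mul _ _
    · rw [if_neg h, SimpleGraph.adjMatrix_apply, if_neg h, zero_mul]
  have hle2 : lam * S ≤ ∑ u, ∑ w, (if H.Adj u w then y u * y w else 0) := by
    rw [hls]
    exact Finset.sum_le_sum fun u _ => Finset.sum_le_sum fun w _ => hterm u w
  have hest := main_est H d f hinj hback y (fun u => abs_nonneg _)
  rw [hSy] at hest
  have hfin : lam ≤ 2 * Real.sqrt ((d : ℝ) * (H.maxDegree : ℝ)) := by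
    have h3 : lam * S ≤ 2 * Real.sqrt ((d : ℝ) * (H.maxDegree : ℝ)) * S := hle2.trans hest
    exact le_of_mul_le_mul_right h3 hSpos
  have hsqrt : Real.sqrt (4 * (d : ℝ) * (H.maxDegree : ℝ))
      = 2 * Real.sqrt ((d : ℝ) * (H.maxDegree : ℝ)) := by
    rw [show (4 * (d : ℝ) * (H.maxDegree : ℝ)) = 2 ^ 2 * ((d : ℝ) * (H.maxDegree : ℝ)) by ring,
      Real.sqrt_mul (by positivity), Real.sqrt_sq (by norm_num)]
  rw [hsqrt]
  exact hfin
end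

section
/- Let G be a finite simple graph with a partition V(G) = V₁ ∪ ⋯ ∪ V_k into nonempty parts with |V_i| = n_i, let e_{ij} denote the number of ordered pairs (u, v) with u ∈ V_i, v ∈ V_j and uv an edge of G, and set b_{ij} = e_{ij}/n_i. If B' = [b'_{ij}] is any real k×k matrix with 0 ≤ b'_{ij} ≤ b_{ij} for all i, j, then ρ(G) ≥ ρ(B'), where ρ(B') is the maximum modulus of an eigenvalue of B'. -/
noncomputable def matSpecRad {n : Type*} [Fintype n] [DecidableEq n] (M : Matrix n n ℝ) : ℝ :=
  sSup {r : ℝ | ∃ z ∈ spectrum ℂ (M.map (fun x : ℝ => (x : ℂ))), ‖z‖ = r}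

open Matrix

lemma rayleigh_aux {n : Type*} [Fintype n] [DecidableEq n] {A : Matrix n n ℝ}
    (hA : A.IsHermitian) {c : ℝ} (hc : ∀ i, hA.eigenvalues i ≤ c) (w : n → ℝ) :
    w ⬝ᵥ (A *ᵥ w) ≤ c * (w ⬝ᵥ w) := by
  classical
  set U : Matrix n n ℝ := (hA.eigenvectorUnitary : Matrix n n ℝ) with hU
  have hstar : star U = Uᵀ := by
    rw [Matrix.star_eq_conjTranspose]; exact Matrix.conjTranspose_eq_transpose_of_trivial U
  have hUU : U * Uᵀ = 1 := by
    rw [← hstar]; exact (Matrix.mem_unitaryGroup_iff).mp (hA.eigenvectorUnitary).2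
  set v : n → ℝ := w ᵥ* U with hv
  have hspec : A = U * Matrix.diagonal hA.eigenvalues * Uᵀ := by
    rw [← hstar]; simpa using hA.spectral_theorem
  have h1 : w ⬝ᵥ (A *ᵥ w) = v ⬝ᵥ (Matrix.diagonal hA.eigenvalues *ᵥ v) := by
    conv_lhs => rw [hspec]
    rw [Matrix.mul_assoc, ← Matrix.mulVec_mulVec, Matrix.dotProduct_mulVec, ← hv,
      ← Matrix.mulVec_mulVec, Matrix.mulVec_transpose, ← hv]
  have h2 : w ⬝ᵥ w = v ⬝ᵥ v := by
    conv_lhs => rw [show w ⬝ᵥ w = w ⬝ᵥ ((U * Uᵀ) *ᵥ w) by rw [hUU, Matrix.one_mulVec]]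
    rw [← Matrix.mulVec_mulVec, Matrix.dotProduct_mulVec, ← hv, Matrix.mulVec_transpose, ← hv]
  rw [h1, h2]
  have hd : v ⬝ᵥ (Matrix.diagonal hA.eigenvalues *ᵥ v) = ∑ i, hA.eigenvalues i * (v i * v i) := by
    simp [dotProduct, Matrix.mulVec_diagonal, mul_comm, mul_assoc, mul_left_comm]
  rw [hd, dotProduct, Finset.mul_sum]
  exact Finset.sum_le_sum fun i _ => mul_le_mul_of_nonneg_right (hc i) (mul_self_nonneg _)

lemma trace_eq_sum_eigs {n : Type*} [Fintype n] [DecidableEq n] {A : Matrix n n ℝ}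
    (hA : A.IsHermitian) : ∑ i, hA.eigenvalues i = Matrix.trace A := by
  classical
  set U : Matrix n n ℝ := (hA.eigenvectorUnitary : Matrix n n ℝ) with hU
  have hstar : star U = Uᵀ := by
    rw [Matrix.star_eq_conjTranspose]; exact Matrix.conjTranspose_eq_transpose_of_trivial U
  have hUU : Uᵀ * U = 1 := by
    rw [← hstar]; exact (Matrix.mem_unitaryGroup_iff').mp (hA.eigenvectorUnitary).2
  have hspec : A = U * Matrix.diagonal hA.eigenvalues * Uᵀ := by
    rw [← hstar]; simpa using hA.spectral_theorem
  conv_rhs => rw [hspec, Matrix.trace_mul_comm, ← Matrix.mul_assoc, hUU, Matrix.one_mul]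
  simp [Matrix.trace, Matrix.diag]

lemma exists_eigvec {k : ℕ} (M : Matrix (Fin k) (Fin k) ℂ) {z : ℂ} (hz : z ∈ spectrum ℂ M) :
    ∃ x : Fin k → ℂ, x ≠ 0 ∧ M.mulVec x = z • x := by
  rw [spectrum.mem_iff] at hz
  have hdet : (algebraMap ℂ (Matrix (Fin k) (Fin k) ℂ) z - M).det = 0 := by
    by_contra h
    exact hz ((Matrix.isUnit_iff_isUnit_det _).2 (Ne.isUnit h))
  obtain ⟨x, hx0, hx⟩ := (Matrix.exists_mulVec_eq_zero_iff).2 hdet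
  refine ⟨x, hx0, ?_⟩
  rw [Matrix.sub_mulVec, sub_eq_zero, Algebra.algebraMap_eq_smul_one,
    Matrix.smul_mulVec, Matrix.one_mulVec] at hx
  exact hx.symm

/-- If B' is a quotient sub-adjacency matrix for a partition of V(G) into nonempty parts
(the partition is given by a surjective coloring `P`; `b i j = e i j / n i` where
`e i j` counts ordered adjacent pairs from part i to part j and `n i` is the size of
part i), then ρ(G) ≥ ρ(B'). -/
theorem stmt8 {V : Type*} [Fintype V] [DecidableEq V] (G : SimpleGraph V)
    {k : ℕ} (P : V → Fin k) (hP : Function.Surjective P)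
    (B' : Matrix (Fin k) (Fin k) ℝ)
    (hB' : ∀ i j : Fin k, 0 ≤ B' i j ∧
      B' i j ≤ (Nat.card {p : V × V | P p.1 = i ∧ P p.2 = j ∧ G.Adj p.1 p.2} : ℝ) /
        (Nat.card {v : V | P v = i} : ℝ)) :
    matSpecRad B' ≤ specRad G := by
  classical
  by_cases hk : k = 0
  · subst hk
    have hV : IsEmpty V := ⟨fun v => Fin.elim0 (P v)⟩
    have h1 : matSpecRad B' = 0 := by
      have h : spectrum ℂ (B'.map fun x : ℝ => (x : ℂ)) = ∅ := spectrum.of_subsingleton _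
      have h2 : {r : ℝ | ∃ z ∈ spectrum ℂ (B'.map (fun x : ℝ => (x : ℂ))), ‖z‖ = r} = ∅ := by
        simp [h]
      rw [matSpecRad, h2, Real.sSup_empty]
    have h2 : specRad G = 0 := by
      have h : spectrum ℝ (G.adjMatrix ℝ) = ∅ := spectrum.of_subsingleton _
      show sSup (spectrum ℝ (G.adjMatrix ℝ)) = 0
      rw [h, Real.sSup_empty]
    rw [h1, h2]
  · have hk0 : 0 < k := Nat.pos_of_ne_zero hk
    have hVne : Nonempty V := ⟨(hP ⟨0, hk0⟩).choose⟩
    set A : Matrix V V ℝ := G.adjMatrix ℝ with hAdef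
    have hA : A.IsHermitian := by
      ext i j; simp [hAdef, Matrix.conjTranspose_apply, G.adj_comm]
    have hsr : specRad G = sSup (spectrum ℝ A) := rfl
    have hbdd : BddAbove (spectrum ℝ A) := (Matrix.finite_real_spectrum (A := A)).bddAbove
    have hspec_le : ∀ i, hA.eigenvalues i ≤ specRad G := fun i =>
      hsr ▸ le_csSup hbdd (hA.eigenvalues_mem_spectrum_real i)
    have h0 : (0:ℝ) ≤ specRad G := by
      have htr : ∑ i, hA.eigenvalues i = 0 := by
        rw [trace_eq_sum_eigs hA]
        simp [hAdef, Matrix.trace, Matrix.diag]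
      by_contra hneg
      push_neg at hneg
      have hall : ∀ i ∈ Finset.univ, hA.eigenvalues i < 0 := fun i _ =>
        lt_of_le_of_lt (hspec_le i) hneg
      have := Finset.sum_neg hall Finset.univ_nonempty
      rw [htr] at this
      exact lt_irrefl 0 this
    refine Real.sSup_le ?_ h0
    rintro r ⟨z, hz, rfl⟩
    obtain ⟨x, hx0, hx⟩ := exists_eigvec _ hz
    set y : Fin k → ℝ := fun i => ‖x i‖ with hy
    set w : V → ℝ := fun v => y (P v) with hw
    have hy0 : ∀ i, 0 ≤ y i := fun i => norm_nonneg _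
    -- fiber cardinalities
    set N : Fin k → ℝ := fun i => (Nat.card {v : V | P v = i} : ℝ) with hN
    have hNpos : ∀ i, 0 < N i := by
      intro i
      have hne : Nonempty {v : V | P v = i} := ⟨⟨(hP i).choose, (hP i).choose_spec⟩⟩
      have h := Nat.card_pos (α := {v : V | P v = i})
      show (0:ℝ) < (Nat.card {v : V | P v = i} : ℝ)
      exact_mod_cast h
    have hNcard : ∀ i, N i = ∑ v : V, (if P v = i then (1:ℝ) else 0) := by
      intro i
      show (Nat.card {v : V | P v = i} : ℝ) = _
      rw [Nat.card_eq_fintype_card, Fintype.card_subtype]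
      push_cast [Finset.card_filter]
      simp
    -- edge counts
    set F : Fin k → Fin k → ℝ := fun i j =>
      ∑ p : V × V, (if P p.1 = i ∧ P p.2 = j ∧ G.Adj p.1 p.2 then (1:ℝ) else 0) with hF
    have hFcard : ∀ i j,
        (Nat.card {p : V × V | P p.1 = i ∧ P p.2 = j ∧ G.Adj p.1 p.2} : ℝ) = F i j := by
      intro i j
      show (Nat.card {p : V × V | P p.1 = i ∧ P p.2 = j ∧ G.Adj p.1 p.2} : ℝ) =
        ∑ p : V × V, (if P p.1 = i ∧ P p.2 = j ∧ G.Adj p.1 p.2 then (1:ℝ) else 0)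
      rw [Nat.card_eq_fintype_card, Fintype.card_subtype, Finset.card_filter, Nat.cast_sum]
      refine Finset.sum_congr rfl fun p _ => ?_
      simp [Set.mem_setOf_eq, apply_ite (Nat.cast : ℕ → ℝ)]
    -- B' bounded by F / N, multiplied out
    have hFB : ∀ i j, B' i j * N i ≤ F i j := by
      intro i j
      have h := (hB' i j).2
      rw [hFcard i j] at h
      exact (le_div_iff₀ (hNpos i)).mp h
    -- eigen inequality on y
    have hyB : ∀ i, ‖z‖ * y i ≤ ∑ j, B' i j * y j := by
      intro i
      have h2 : z * x i = ∑ j, (B' i j : ℂ) * x j := by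
        have := congrFun hx i
        simp only [Matrix.mulVec, dotProduct, Matrix.map_apply, Pi.smul_apply,
          smul_eq_mul] at this
        exact this.symm
      calc ‖z‖ * y i = ‖∑ j, (B' i j : ℂ) * x j‖ := by
            rw [← h2, norm_mul]
        _ ≤ ∑ j, ‖(B' i j : ℂ) * x j‖ := norm_sum_le _ _
        _ = ∑ j, B' i j * y j := by
            refine Finset.sum_congr rfl fun j _ => ?_
            rw [norm_mul, Complex.norm_real, Real.norm_eq_abs, abs_of_nonneg (hB' i j).1]
    -- key per-row inequality
    have hrow : ∀ i, N i * (‖z‖ * y i) ≤ ∑ j, F i j * y j := by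
      intro i
      calc N i * (‖z‖ * y i) = (‖z‖ * y i) * N i := by ring
        _ ≤ (∑ j, B' i j * y j) * N i :=
            mul_le_mul_of_nonneg_right (hyB i) (le_of_lt (hNpos i))
        _ = ∑ j, (B' i j * N i) * y j := by
            rw [Finset.sum_mul]; exact Finset.sum_congr rfl fun j _ => by ring
        _ ≤ ∑ j, F i j * y j := Finset.sum_le_sum fun j _ =>
            mul_le_mul_of_nonneg_right (hFB i j) (hy0 j)
    -- identities for dot products
    have hWW : w ⬝ᵥ w = ∑ i, N i * (y i * y i) := by
      have h1 : w ⬝ᵥ w = ∑ v : V, y (P v) * y (P v) := rfl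
      rw [h1]
      have step : ∀ v : V, y (P v) * y (P v)
          = ∑ i : Fin k, (if P v = i then y i * y i else 0) := by
        intro v; rw [Finset.sum_ite_eq]; simp
      rw [Finset.sum_congr rfl fun v _ => step v, Finset.sum_comm]
      refine Finset.sum_congr rfl fun i _ => ?_
      rw [hNcard i, Finset.sum_mul]
      refine Finset.sum_congr rfl fun v _ => ?_
      by_cases h : P v = i <;> simp [h]
    have collapse : ∀ u v : V,
        (∑ q : Fin k × Fin k, if P u = q.1 ∧ P v = q.2 ∧ G.Adj u v then y q.1 * y q.2 else 0)
          = (if G.Adj u v then (1:ℝ) else 0) * (y (P u) * y (P v)) := by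
      intro u v
      rw [Fintype.sum_prod_type]
      by_cases h : G.Adj u v
      · simp [h, ite_and, Finset.sum_ite_eq]
      · simp [h]
    have hAW : w ⬝ᵥ (A *ᵥ w) = ∑ i, ∑ j, F i j * (y i * y j) := by
      have lhs : w ⬝ᵥ (A *ᵥ w)
          = ∑ u : V, ∑ v : V, (if G.Adj u v then (1:ℝ) else 0) * (y (P u) * y (P v)) := by
        simp only [dotProduct, Matrix.mulVec, Finset.mul_sum]
        refine Finset.sum_congr rfl fun u _ => Finset.sum_congr rfl fun v _ => ?_
        simp only [hAdef, SimpleGraph.adjMatrix_apply, hw]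
        ring
      have rhs : ∑ i, ∑ j, F i j * (y i * y j)
          = ∑ q : Fin k × Fin k, ∑ p : V × V,
            (if P p.1 = q.1 ∧ P p.2 = q.2 ∧ G.Adj p.1 p.2 then y q.1 * y q.2 else 0) := by
        rw [Fintype.sum_prod_type]
        refine Finset.sum_congr rfl fun i _ => Finset.sum_congr rfl fun j _ => ?_
        show F i j * (y i * y j) = _
        rw [hF, Finset.sum_mul]
        refine Finset.sum_congr rfl fun p _ => ?_
        rw [ite_mul, one_mul, zero_mul]
      have rhs2 : (∑ q : Fin k × Fin k, ∑ p : V × V,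
            (if P p.1 = q.1 ∧ P p.2 = q.2 ∧ G.Adj p.1 p.2 then y q.1 * y q.2 else 0))
          = ∑ u : V, ∑ v : V, (if G.Adj u v then (1:ℝ) else 0) * (y (P u) * y (P v)) := by
        rw [Finset.sum_comm, Fintype.sum_prod_type]
        exact Finset.sum_congr rfl fun u _ => Finset.sum_congr rfl fun v _ => collapse u v
      rw [lhs, rhs, rhs2]
    -- lower bound
    have hlow : ‖z‖ * (w ⬝ᵥ w) ≤ w ⬝ᵥ (A *ᵥ w) := by
      rw [hAW, hWW, Finset.mul_sum]
      refine Finset.sum_le_sum fun i _ => ?_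
      calc ‖z‖ * (N i * (y i * y i)) = (N i * (‖z‖ * y i)) * y i := by ring
        _ ≤ (∑ j, F i j * y j) * y i := mul_le_mul_of_nonneg_right (hrow i) (hy0 i)
        _ = ∑ j, F i j * (y i * y j) := by
            rw [Finset.sum_mul]; exact Finset.sum_congr rfl fun j _ => by ring
    -- positivity of w ⬝ᵥ w
    have hwpos : 0 < w ⬝ᵥ w := by
      rw [hWW]
      obtain ⟨i0, hi0⟩ : ∃ i0, x i0 ≠ 0 := by
        by_contra h; push_neg at h; exact hx0 (funext fun i => h i)
      have hyi0 : 0 < y i0 := norm_pos_iff.mpr hi0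
      refine Finset.sum_pos' (fun i _ => ?_) ⟨i0, Finset.mem_univ i0, ?_⟩
      · exact mul_nonneg (le_of_lt (hNpos i)) (mul_self_nonneg _)
      · exact mul_pos (hNpos i0) (mul_pos hyi0 hyi0)
    -- conclude
    have hup : w ⬝ᵥ (A *ᵥ w) ≤ specRad G * (w ⬝ᵥ w) := rayleigh_aux hA hspec_le w
    exact (mul_le_mul_iff_of_pos_right hwpos).mp (le_trans hlow hup)
end

section
/- Let G₀ be a finite simple graph with minimum degree r. Then G₀ has a subgraph G with the same vertex set such that: G is obtained from G₀ by deleting only edges both of whose endpoints have degree greater than r at the time of deletion, the minimum degree of G equals r, and the set of vertices of G whose degree in G is greater than r is an independent set in G. -/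
noncomputable def minDeg {V : Type*} [Fintype V] (G : SimpleGraph V) : ℕ := by
  classical exact G.minDegree

open SimpleGraph

lemma deg_eq_ncard {V : Type*} [Fintype V] (G : SimpleGraph V) (v : V) :
    deg G v = (G.neighborSet v).ncard := by
  classical
  unfold deg
  rw [SimpleGraph.degree, neighborFinset_def, Set.ncard_eq_toFinset_card']

lemma minDeg_eq {V : Type*} [Fintype V] (G : SimpleGraph V) [DecidableRel G.Adj] :
    minDeg G = G.minDegree := by
  unfold minDeg
  congr!

lemma deg_eq {V : Type*} [Fintype V] (G : SimpleGraph V) [DecidableRel G.Adj] (v : V) :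
    deg G v = G.degree v := by
  rw [deg_eq_ncard, SimpleGraph.degree, neighborFinset_def, Set.ncard_eq_toFinset_card']

lemma neighborSet_delete_of_ne {V : Type*} [Fintype V] (G : SimpleGraph V) (x y v : V)
    (hvx : v ≠ x) (hvy : v ≠ y) :
    (G.deleteEdges {s(x, y)}).neighborSet v = G.neighborSet v := by
  ext w
  simp only [mem_neighborSet, deleteEdges_adj, Set.mem_singleton_iff, Sym2.eq_iff]
  constructor
  · rintro ⟨h, -⟩; exact h
  · intro h
    refine ⟨h, ?_⟩
    rintro (⟨rfl, rfl⟩ | ⟨rfl, rfl⟩) <;> simp_all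

lemma neighborSet_delete_left {V : Type*} [Fintype V] (G : SimpleGraph V) (x y : V) :
    (G.deleteEdges {s(x, y)}).neighborSet x = G.neighborSet x \ {y} := by
  ext w
  simp only [mem_neighborSet, deleteEdges_adj, Set.mem_singleton_iff, Sym2.eq_iff,
    Set.mem_diff]
  constructor
  · rintro ⟨h, h2⟩
    exact ⟨h, fun hw => h2 (Or.inl ⟨trivial, hw⟩)⟩
  · rintro ⟨h, hw⟩
    refine ⟨h, fun hc => ?_⟩
    rcases hc with ⟨-, rfl⟩ | ⟨rfl, rfl⟩
    · exact hw rfl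
    · exact G.irrefl h

lemma deg_delete_of_ne {V : Type*} [Fintype V] (G : SimpleGraph V) {x y v : V}
    (hvx : v ≠ x) (hvy : v ≠ y) :
    deg (G.deleteEdges {s(x, y)}) v = deg G v := by
  rw [deg_eq_ncard, deg_eq_ncard, neighborSet_delete_of_ne G x y v hvx hvy]

lemma deg_delete_left {V : Type*} [Fintype V] (G : SimpleGraph V) {x y : V}
    (h : G.Adj x y) :
    deg (G.deleteEdges {s(x, y)}) x = deg G x - 1 := by
  rw [deg_eq_ncard, deg_eq_ncard, neighborSet_delete_left,
    Set.ncard_diff_singleton_of_mem (by simpa using h)]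

lemma deg_delete_right {V : Type*} [Fintype V] (G : SimpleGraph V) {x y : V}
    (h : G.Adj x y) :
    deg (G.deleteEdges {s(x, y)}) y = deg G y - 1 := by
  rw [show s(x,y) = s(y,x) from Sym2.eq_swap]
  exact deg_delete_left G h.symm

lemma minDeg_le_deg {V : Type*} [Fintype V] [Nonempty V] (G : SimpleGraph V) (v : V) :
    minDeg G ≤ deg G v := by
  classical
  rw [minDeg_eq, deg_eq]
  exact G.minDegree_le_degree v

lemma exists_deg_eq_minDeg {V : Type*} [Fintype V] [Nonempty V] (G : SimpleGraph V) :
    ∃ v, deg G v = minDeg G := by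
  classical
  rw [minDeg_eq]
  obtain ⟨v, hv⟩ := G.exists_minimal_degree_vertex
  exact ⟨v, by rw [deg_eq, hv]⟩

lemma le_minDeg {V : Type*} [Fintype V] [Nonempty V] (G : SimpleGraph V) (k : ℕ)
    (h : ∀ v, k ≤ deg G v) : k ≤ minDeg G := by
  classical
  rw [minDeg_eq]
  exact G.le_minDegree_of_forall_le_degree k (fun v => by rw [← deg_eq]; exact h v)

lemma aux {V : Type*} [Fintype V] [Nonempty V] (r : ℕ) :
    ∀ n, ∀ G₀ : SimpleGraph V, G₀.edgeSet.ncard ≤ n → minDeg G₀ = r →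
    ∃ (G : SimpleGraph V) (m : ℕ) (A : ℕ → SimpleGraph V),
      A 0 = G₀ ∧ A m = G ∧
      (∀ i < m, ∃ x y : V, (A i).Adj x y ∧
        r < deg (A i) x ∧ r < deg (A i) y ∧
        A (i + 1) = (A i).deleteEdges {s(x, y)}) ∧
      minDeg G = r ∧
      (∀ x y : V, r < deg G x → r < deg G y → ¬ G.Adj x y) := by
  intro n
  induction n with
  | zero =>
    intro G₀ hcard hr
    refine ⟨G₀, 0, fun _ => G₀, rfl, rfl, by omega, hr, ?_⟩
    intro x y _ _ hadj
    have hE : G₀.edgeSet = ∅ :=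
      (Set.ncard_eq_zero (s := G₀.edgeSet) (Set.toFinite _)).mp (by omega)
    exact absurd ((SimpleGraph.mem_edgeSet G₀).mpr hadj) (by simp [hE])
  | succ n ih =>
    intro G₀ hcard hr
    by_cases h : ∃ x y, G₀.Adj x y ∧ r < deg G₀ x ∧ r < deg G₀ y
    · obtain ⟨x, y, hxy, hx, hy⟩ := h
      set G' := G₀.deleteEdges {s(x, y)} with hG'
      have hmem : s(x, y) ∈ G₀.edgeSet := hxy
      have hcard' : G'.edgeSet.ncard ≤ n := by
        rw [hG', SimpleGraph.edgeSet_deleteEdges,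
          Set.ncard_diff_singleton_of_mem hmem]
        omega
      have hmin' : minDeg G' = r := by
        apply le_antisymm
        · obtain ⟨v, hv⟩ := exists_deg_eq_minDeg G₀
          rw [hr] at hv
          have hvx : v ≠ x := fun he => by rw [he] at hv; omega
          have hvy : v ≠ y := fun he => by rw [he] at hv; omega
          have := minDeg_le_deg G' v
          rwa [hG', deg_delete_of_ne G₀ hvx hvy, hv] at this
        · apply le_minDeg
          intro v
          by_cases hvx : v = x
          · subst hvx; rw [hG', deg_delete_left G₀ hxy]; omega
          by_cases hvy : v = y
          · subst hvy; rw [hG', deg_delete_right G₀ hxy]; omega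
          rw [hG', deg_delete_of_ne G₀ hvx hvy]
          have := minDeg_le_deg G₀ v
          omega
      obtain ⟨G, m, A, hA0, hAm, hstep, hmin, hind⟩ := ih G' hcard' hmin'
      refine ⟨G, m + 1, fun i => Nat.casesOn i G₀ A, rfl, hAm, ?_, hmin, hind⟩
      intro i hi
      match i with
      | 0 =>
        exact ⟨x, y, hxy, hx, hy, by simpa using hA0⟩
      | j + 1 =>
        exact hstep j (by omega)
    · refine ⟨G₀, 0, fun _ => G₀, rfl, rfl, by omega, hr, ?_⟩
      intro x y hx hy hadj
      exact h ⟨x, y, hadj, hx, hy⟩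

/-- Starting from a graph G₀ of minimum degree r, one can repeatedly delete edges both of
whose endpoints currently have degree greater than r, reaching a spanning subgraph G with
minimum degree r in which the vertices of degree greater than r form an independent set. -/
theorem stmt10 {V : Type*} [Fintype V] [Nonempty V] (G₀ : SimpleGraph V)
    (r : ℕ) (hr : minDeg G₀ = r) :
    ∃ (G : SimpleGraph V) (m : ℕ) (A : ℕ → SimpleGraph V),
      A 0 = G₀ ∧ A m = G ∧
      (∀ i < m, ∃ x y : V, (A i).Adj x y ∧
        r < deg (A i) x ∧ r < deg (A i) y ∧
        A (i + 1) = (A i).deleteEdges {s(x, y)}) ∧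
      minDeg G = r ∧
      (∀ x y : V, r < deg G x → r < deg G y → ¬ G.Adj x y) :=
  aux r G₀.edgeSet.ncard G₀ le_rfl hr
end

section
/- Let α > 0 be a real number and let T ≥ 10 and t > 0 be integers such that 6α·log(20T) ≤ t ≤ T (natural logarithm). Let H be a finite simple bipartite graph of maximum degree Δ(H) ≥ 2T with bipartition V(H) = A ∪ B such that every vertex of A has degree between t and T, and every vertex of B has degree at least Δ(H)/2. Then H is not α-log-sparse; that is, H contains a subgraph H'' with at least one edge whose average degree 2|E(H'')|/|V(H'')| exceeds α·log(Δ(H'')). -/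
open Finset

/-- Double counting edges between two finsets of vertices. -/
lemma dcount {V : Type*} [Fintype V] [DecidableEq V] (G : SimpleGraph V)
    [DecidableRel G.Adj] (S R : Finset V) :
    ∑ s ∈ S, (G.neighborFinset s ∩ R).card = ∑ r ∈ R, (G.neighborFinset r ∩ S).card := by
  have key : ∀ (x : V) (Y : Finset V),
      (G.neighborFinset x ∩ Y).card = ∑ y ∈ Y, if G.Adj x y then 1 else 0 := by
    intro x Y
    rw [← Finset.card_filter]
    congr 1
    ext y
    simp [SimpleGraph.mem_neighborFinset, and_comm]
  calc ∑ s ∈ S, (G.neighborFinset s ∩ R).card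
      = ∑ s ∈ S, ∑ r ∈ R, if G.Adj s r then 1 else 0 := by
        exact Finset.sum_congr rfl fun s _ => key s R
    _ = ∑ r ∈ R, ∑ s ∈ S, if G.Adj s r then 1 else 0 := Finset.sum_comm
    _ = ∑ r ∈ R, (G.neighborFinset r ∩ S).card := by
        refine Finset.sum_congr rfl fun r _ => ?_
        rw [key r S]
        refine Finset.sum_congr rfl fun s _ => ?_
        simp [G.adj_comm]

set_option maxHeartbeats 1000000 in
/-- A bipartite graph whose A-side degrees lie between t and T and whose B-side degrees
are at least Δ(H)/2, with Δ(H) ≥ 2T, T ≥ 10 and 6α·log(20T) ≤ t ≤ T, is not α-log-sparse: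
it contains a subgraph with at least one edge whose average degree exceeds α·log of its
maximum degree. -/
theorem stmt11 {V : Type*} [Fintype V] [DecidableEq V]
    (α : ℝ) (hα : 0 < α) (T t : ℕ) (hT : 10 ≤ T) (ht : 0 < t)
    (htl : 6 * α * Real.log (20 * T) ≤ (t : ℝ)) (htT : t ≤ T)
    (H : SimpleGraph V) (A B : Set V)
    (hcover : A ∪ B = Set.univ) (hdisj : Disjoint A B)
    (hbip : ∀ u v : V, H.Adj u v → (u ∈ A ∧ v ∈ B) ∨ (u ∈ B ∧ v ∈ A))
    (hΔ : 2 * T ≤ maxDeg H)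
    (hA : ∀ v ∈ A, t ≤ deg H v ∧ deg H v ≤ T)
    (hB : ∀ v ∈ B, (maxDeg H : ℝ) / 2 ≤ (deg H v : ℝ)) :
    ∃ H'' : SimpleGraph V, H'' ≤ H ∧ H''.edgeSet.Nonempty ∧
      α * Real.log (maxDeg H'') <
        2 * (Nat.card H''.edgeSet : ℝ) / (Nat.card H''.support : ℝ) := by
  classical
  have hdeg : ∀ (G : SimpleGraph V) (v : V) (inst : Fintype (G.neighborSet v)),
      deg G v = @SimpleGraph.degree V G v inst := by
    intro G v inst; unfold deg; congr!
  have hmax : ∀ (G : SimpleGraph V) (inst : DecidableRel G.Adj),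
      maxDeg G = @SimpleGraph.maxDegree V G _ inst := by
    intro G inst; unfold maxDeg; congr!
  -- basic facts
  have hAB : ∀ v : V, v ∈ A ∨ v ∈ B := by
    intro v
    have : v ∈ A ∪ B := hcover ▸ Set.mem_univ v
    exact this
  have hnotboth : ∀ v : V, v ∈ A → v ∈ B → False := fun v ha hb =>
    Set.disjoint_left.mp hdisj ha hb
  have hnAA : ∀ u v : V, H.Adj u v → u ∈ A → v ∈ A → False := by
    intro u v h hu hv
    rcases hbip u v h with ⟨_, h2⟩ | ⟨h1, _⟩
    · exact hnotboth v hv h2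
    · exact hnotboth u hu h1
  have hnBB : ∀ u v : V, H.Adj u v → u ∈ B → v ∈ B → False := by
    intro u v h hu hv
    rcases hbip u v h with ⟨h1, _⟩ | ⟨_, h2⟩
    · exact hnotboth u h1 hu
    · exact hnotboth v h2 hv
  have hΔ' : 2 * T ≤ H.maxDegree := by rw [← hmax H inferInstance]; exact hΔ
  have hA' : ∀ v ∈ A, t ≤ H.degree v ∧ H.degree v ≤ T := by
    intro v hv; rw [← hdeg H v inferInstance]; exact hA v hv
  have hB2 : ∀ v ∈ B, H.maxDegree ≤ 2 * H.degree v := by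
    intro v hv
    have := hB v hv
    rw [hdeg H v inferInstance, hmax H inferInstance] at this
    have h2 : (H.maxDegree : ℝ) ≤ 2 * (H.degree v : ℝ) := by linarith
    exact_mod_cast h2
  -- V is nonempty
  rcases isEmpty_or_nonempty V with hV | hV
  · exfalso
    have h0 : H.maxDegree = 0 := by
      simp only [SimpleGraph.maxDegree, Finset.univ_eq_empty, Finset.image_empty,
        Finset.max_empty]
      rfl
    omega
  -- finset versions of A and B
  set Af : Finset V := A.toFinset with hAf
  set Bf : Finset V := B.toFinset with hBf
  have hmemAf : ∀ v : V, v ∈ Af ↔ v ∈ A := fun v => Set.mem_toFinset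
  have hmemBf : ∀ v : V, v ∈ Bf ↔ v ∈ B := fun v => Set.mem_toFinset
  -- A is nonempty
  obtain ⟨v0, hv0⟩ := H.exists_maximal_degree_vertex
  have hdv0 : 0 < H.degree v0 := by omega
  obtain ⟨u0, hu0⟩ := (H.degree_pos_iff_exists_adj v0).mp hdv0
  have hafne : Af.Nonempty := by
    rcases hbip v0 u0 hu0 with ⟨h1, _⟩ | ⟨_, h2⟩
    · exact ⟨v0, (hmemAf v0).mpr h1⟩
    · exact ⟨u0, (hmemAf u0).mpr h2⟩
  -- choose a maximum subset A' of Af all of whose "back-degrees" are at most C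
  obtain ⟨A', hA'mem, hA'max⟩ := Finset.exists_max_image
    (Af.powerset.filter (fun S => ∀ v : V, ((H.neighborFinset v) ∩ S).card ≤ 400 * T ^ 2))
    Finset.card ⟨∅, by simp⟩
  rw [Finset.mem_filter, Finset.mem_powerset] at hA'mem
  obtain ⟨hA'sub, hA'cap⟩ := hA'mem
  have hCpos : 1 ≤ 400 * T ^ 2 := by nlinarith
  have hA'ne : A'.Nonempty := by
    rw [Finset.nonempty_iff_ne_empty]
    intro hccon
    obtain ⟨a, ha⟩ := hafne
    have hmem : {a} ∈ Af.powerset.filter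
        (fun S => ∀ v : V, ((H.neighborFinset v) ∩ S).card ≤ 400 * T ^ 2) := by
      rw [Finset.mem_filter, Finset.mem_powerset]
      refine ⟨Finset.singleton_subset_iff.mpr ha, fun v => ?_⟩
      calc ((H.neighborFinset v) ∩ {a}).card ≤ ({a} : Finset V).card :=
            Finset.card_le_card Finset.inter_subset_right
        _ = 1 := Finset.card_singleton a
        _ ≤ 400 * T ^ 2 := hCpos
    have := hA'max _ hmem
    simp [hccon] at this
  have hA'A : ∀ a ∈ A', a ∈ A := fun a ha => (hmemAf a).mp (hA'sub ha)
  have hdegA' : ∀ a ∈ A', t ≤ H.degree a ∧ H.degree a ≤ T := fun a ha => hA' a (hA'A a ha)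
  -- the set of "blockers"
  set D : Finset V := Bf.filter (fun b => 400 * T ^ 2 ≤ (H.neighborFinset b ∩ A').card)
    with hD
  have hblock : ∀ a ∈ Af, a ∉ A' → ∃ b ∈ D, a ∈ H.neighborFinset b := by
    intro a haf hna
    have hins : ¬ (∀ v : V, ((H.neighborFinset v) ∩ insert a A').card ≤ 400 * T ^ 2) := by
      intro hP
      have hmem : insert a A' ∈ Af.powerset.filter
          (fun S => ∀ v : V, ((H.neighborFinset v) ∩ S).card ≤ 400 * T ^ 2) := by
        rw [Finset.mem_filter, Finset.mem_powerset]
        exact ⟨Finset.insert_subset haf hA'sub, hP⟩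
      have := hA'max _ hmem
      rw [Finset.card_insert_of_notMem hna] at this
      omega
    push_neg at hins
    obtain ⟨v, hv⟩ := hins
    have hvcap : 400 * T ^ 2 ≤ (H.neighborFinset v ∩ A').card := by
      have hsub : H.neighborFinset v ∩ insert a A' ⊆ insert a (H.neighborFinset v ∩ A') := by
        intro x hx
        rw [Finset.mem_inter, Finset.mem_insert] at hx
        rw [Finset.mem_insert, Finset.mem_inter]
        tauto
      have h1 := Finset.card_le_card hsub
      have h2 := Finset.card_insert_le a (H.neighborFinset v ∩ A')
      omega
    have haN : a ∈ H.neighborFinset v := by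
      by_contra hna2
      have heq : H.neighborFinset v ∩ insert a A' = H.neighborFinset v ∩ A' := by
        ext x
        rw [Finset.mem_inter, Finset.mem_inter, Finset.mem_insert]
        constructor
        · rintro ⟨hx1, hx2 | hx3⟩
          · exact absurd (hx2 ▸ hx1) hna2
          · exact ⟨hx1, hx3⟩
        · tauto
      rw [heq] at hv
      exact absurd (hA'cap v) (not_le.mpr hv)
    have hvB : v ∈ B := by
      rcases hAB v with hvA | hvB
      · exfalso
        have : H.neighborFinset v ∩ A' = ∅ := by
          ext x
          simp only [Finset.mem_inter, SimpleGraph.mem_neighborFinset, Finset.notMem_empty,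
            iff_false, not_and]
          intro hadj hxA'
          exact (hnAA v x hadj hvA (hA'A x hxA')).elim
        rw [this] at hvcap
        simp at hvcap
        omega
      · exact hvB
    exact ⟨v, Finset.mem_filter.mpr ⟨(hmemBf v).mpr hvB, hvcap⟩, haN⟩
  -- counting fact F7 : (400T²)·|D| ≤ T·|A'|
  have hF7 : 400 * T ^ 2 * D.card ≤ T * A'.card := by
    calc 400 * T ^ 2 * D.card = ∑ _b ∈ D, 400 * T ^ 2 := by
          rw [Finset.sum_const, smul_eq_mul, mul_comm]
      _ ≤ ∑ b ∈ D, (H.neighborFinset b ∩ A').card :=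
          Finset.sum_le_sum fun b hb => (Finset.mem_filter.mp hb).2
      _ = ∑ a ∈ A', (H.neighborFinset a ∩ D).card := dcount H D A'
      _ ≤ ∑ a ∈ A', H.degree a := Finset.sum_le_sum fun a _ => by
          rw [← H.card_neighborFinset_eq_degree]
          exact Finset.card_le_card Finset.inter_subset_left
      _ ≤ ∑ _a ∈ A', T := Finset.sum_le_sum fun a ha => (hdegA' a ha).2
      _ = T * A'.card := by rw [Finset.sum_const, smul_eq_mul, mul_comm]
  -- counting fact F8 : |Af| ≤ |A'| + Δ·|D|
  have hF8 : Af.card ≤ A'.card + H.maxDegree * D.card := by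
    have h1 : Af.card ≤ A'.card + (Af \ A').card := by
      have hsub : Af ⊆ A' ∪ (Af \ A') := by
        intro x hx
        rw [Finset.mem_union, Finset.mem_sdiff]
        tauto
      calc Af.card ≤ (A' ∪ (Af \ A')).card := Finset.card_le_card hsub
        _ ≤ A'.card + (Af \ A').card := Finset.card_union_le _ _
    have h2 : (Af \ A') ⊆ D.biUnion (fun b => H.neighborFinset b) := by
      intro a ha
      rw [Finset.mem_sdiff] at ha
      obtain ⟨b, hb, hab⟩ := hblock a ha.1 ha.2
      exact Finset.mem_biUnion.mpr ⟨b, hb, hab⟩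
    have h3 : (Af \ A').card ≤ ∑ b ∈ D, (H.neighborFinset b).card :=
      le_trans (Finset.card_le_card h2) (Finset.card_biUnion_le)
    have h4 : ∑ b ∈ D, (H.neighborFinset b).card ≤ H.maxDegree * D.card := by
      calc ∑ b ∈ D, (H.neighborFinset b).card ≤ ∑ _b ∈ D, H.maxDegree :=
            Finset.sum_le_sum fun b _ => by
              rw [H.card_neighborFinset_eq_degree]; exact H.degree_le_maxDegree b
        _ = H.maxDegree * D.card := by rw [Finset.sum_const, smul_eq_mul, mul_comm]
    omega
  -- counting fact F3 : ∑_{b ∈ Bf} deg b ≤ T·|Af|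
  have huniv : (Finset.univ : Finset V) = Af ∪ Bf := by
    ext v
    simp only [Finset.mem_univ, true_iff, Finset.mem_union]
    rcases hAB v with h | h
    · exact Or.inl ((hmemAf v).mpr h)
    · exact Or.inr ((hmemBf v).mpr h)
  have hdisjf : Disjoint Af Bf := by
    rw [Finset.disjoint_left]
    intro v hva hvb
    exact hnotboth v ((hmemAf v).mp hva) ((hmemBf v).mp hvb)
  have hF3 : ∑ b ∈ Bf, H.degree b ≤ T * Af.card := by
    have e1 : ∑ b ∈ Bf, H.degree b = ∑ v ∈ Finset.univ, (H.neighborFinset v ∩ Bf).card := by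
      have h := dcount H Bf Finset.univ
      simp only [Finset.inter_univ, H.card_neighborFinset_eq_degree] at h
      exact h
    rw [e1, huniv, Finset.sum_union hdisjf]
    have hBB : ∑ b ∈ Bf, (H.neighborFinset b ∩ Bf).card = 0 := by
      refine Finset.sum_eq_zero fun b hb => ?_
      rw [Finset.card_eq_zero]
      ext x
      simp only [Finset.mem_inter, SimpleGraph.mem_neighborFinset, Finset.notMem_empty,
        iff_false, not_and]
      intro hadj hxB
      exact (hnBB b x hadj ((hmemBf b).mp hb) ((hmemBf x).mp hxB)).elim
    have hAA : ∑ a ∈ Af, (H.neighborFinset a ∩ Bf).card ≤ ∑ _a ∈ Af, T :=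
      Finset.sum_le_sum fun a ha => by
        calc (H.neighborFinset a ∩ Bf).card ≤ (H.neighborFinset a).card :=
              Finset.card_le_card Finset.inter_subset_left
          _ = H.degree a := H.card_neighborFinset_eq_degree a
          _ ≤ T := (hA' a ((hmemAf a).mp ha)).2
    rw [Finset.sum_const, smul_eq_mul, mul_comm] at hAA
    omega
  -- counting fact F4 : Δ·|Bf| ≤ 2·T·|Af|
  have hF4 : H.maxDegree * Bf.card ≤ 2 * (T * Af.card) := by
    calc H.maxDegree * Bf.card = ∑ _b ∈ Bf, H.maxDegree := by
          rw [Finset.sum_const, smul_eq_mul, mul_comm]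
      _ ≤ ∑ b ∈ Bf, 2 * H.degree b :=
          Finset.sum_le_sum fun b hb => hB2 b ((hmemBf b).mp hb)
      _ = 2 * ∑ b ∈ Bf, H.degree b := by rw [Finset.mul_sum]
      _ ≤ 2 * (T * Af.card) := by omega
  -- F9 : 200·|Bf| ≤ 201·|A'|
  have hΔpos : 0 < H.maxDegree := by omega
  have hF9 : 200 * Bf.card ≤ 201 * A'.card := by
    have h1 : H.maxDegree * (400 * T ^ 2 * Bf.card) ≤
        H.maxDegree * ((400 * T ^ 2 + 2 * T ^ 2) * A'.card) := by
      calc H.maxDegree * (400 * T ^ 2 * Bf.card)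
          = 400 * T ^ 2 * (H.maxDegree * Bf.card) := by ring
        _ ≤ 400 * T ^ 2 * (2 * (T * Af.card)) := Nat.mul_le_mul_left _ hF4
        _ = 2 * T * (400 * T ^ 2 * Af.card) := by ring
        _ ≤ 2 * T * (400 * T ^ 2 * (A'.card + H.maxDegree * D.card)) := by
            have := Nat.mul_le_mul_left (400 * T ^ 2) hF8
            exact Nat.mul_le_mul_left _ this
        _ = 2 * T * (400 * T ^ 2) * A'.card + 2 * T * H.maxDegree * (400 * T ^ 2 * D.card) := by
            ring
        _ ≤ 2 * T * (400 * T ^ 2) * A'.card + 2 * T * H.maxDegree * (T * A'.card) := by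
            have := Nat.mul_le_mul_left (2 * T * H.maxDegree) hF7
            omega
        _ = 2 * T * (400 * T ^ 2 * A'.card) + H.maxDegree * (2 * T ^ 2 * A'.card) := by ring
        _ ≤ H.maxDegree * (400 * T ^ 2 * A'.card) + H.maxDegree * (2 * T ^ 2 * A'.card) := by
            have := Nat.mul_le_mul_right (400 * T ^ 2 * A'.card) hΔ'
            omega
        _ = H.maxDegree * ((400 * T ^ 2 + 2 * T ^ 2) * A'.card) := by ring
    have h2 : 400 * T ^ 2 * Bf.card ≤ (400 * T ^ 2 + 2 * T ^ 2) * A'.card :=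
      Nat.le_of_mul_le_mul_left h1 hΔpos
    have hT2pos : 0 < 2 * T ^ 2 := by positivity
    have h3 : 2 * T ^ 2 * (200 * Bf.card) ≤ 2 * T ^ 2 * (201 * A'.card) := by
      calc 2 * T ^ 2 * (200 * Bf.card) = 400 * T ^ 2 * Bf.card := by ring
        _ ≤ (400 * T ^ 2 + 2 * T ^ 2) * A'.card := h2
        _ = 2 * T ^ 2 * (201 * A'.card) := by ring
    exact Nat.le_of_mul_le_mul_left h3 hT2pos
  -- construct the subgraph H''
  let H'' : SimpleGraph V :=
    { Adj := fun u v => H.Adj u v ∧ (u ∈ A' ∨ v ∈ A')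
      symm := by
        constructor
        intro u v h
        exact ⟨h.1.symm, h.2.symm⟩
      loopless := ⟨fun v h => H.loopless.irrefl v h.1⟩ }
  have hle : H'' ≤ H := by intro u v h; exact h.1
  -- a witness edge
  obtain ⟨a0, ha0⟩ := hA'ne
  have hta0 : t ≤ H.degree a0 := (hdegA' a0 ha0).1
  have hda0 : 0 < H.degree a0 := by omega
  obtain ⟨w0, hw0⟩ := (H.degree_pos_iff_exists_adj a0).mp hda0
  have hadj0 : H''.Adj a0 w0 := ⟨hw0, Or.inl ha0⟩
  have hene : H''.edgeSet.Nonempty := ⟨s(a0, w0), H''.mem_edgeSet.mpr hadj0⟩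
  refine ⟨H'', hle, hene, ?_⟩
  -- degrees of vertices of A' are preserved
  have hnbr : ∀ a ∈ A', H''.neighborFinset a = H.neighborFinset a := by
    intro a ha
    ext w
    simp only [SimpleGraph.mem_neighborFinset]
    constructor
    · exact fun h => h.1
    · exact fun h => ⟨h, Or.inl ha⟩
  have hdegeq : ∀ a ∈ A', H''.degree a = H.degree a := by
    intro a ha
    rw [← H''.card_neighborFinset_eq_degree, ← H.card_neighborFinset_eq_degree, hnbr a ha]
  -- edge count lower bound
  have hEcard : Nat.card H''.edgeSet = H''.edgeFinset.card := by
    rw [Nat.card_eq_fintype_card]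
    exact (Set.toFinset_card _).symm
  have hElower : t * A'.card ≤ 2 * Nat.card H''.edgeSet := by
    rw [hEcard, ← H''.sum_degrees_eq_twice_card_edges]
    calc t * A'.card = ∑ _a ∈ A', t := by rw [Finset.sum_const, smul_eq_mul, mul_comm]
      _ ≤ ∑ a ∈ A', H''.degree a := Finset.sum_le_sum fun a ha => by
          rw [hdegeq a ha]; exact (hdegA' a ha).1
      _ ≤ ∑ v, H''.degree v :=
          Finset.sum_le_sum_of_subset (Finset.subset_univ A')
  -- support bound
  have hsupp : H''.support ⊆ (↑A' : Set V) ∪ B := by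
    intro v hv
    obtain ⟨w, hvw⟩ := (H''.mem_support).mp hv
    rcases hAB v with hvA | hvB
    · left
      rcases hvw.2 with h | h
      · exact h
      · exact (hnAA v w hvw.1 hvA (hA'A w h)).elim
    · right; exact hvB
  have hscard : Nat.card H''.support ≤ A'.card + Bf.card := by
    rw [Nat.card_coe_set_eq]
    calc H''.support.ncard ≤ ((↑A' : Set V) ∪ B).ncard :=
          Set.ncard_le_ncard hsupp (Set.toFinite _)
      _ ≤ (↑A' : Set V).ncard + B.ncard := Set.ncard_union_le _ _
      _ = A'.card + Bf.card := by
          rw [Set.ncard_coe_finset, Set.ncard_eq_toFinset_card']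
  have hsprt : 0 < Nat.card H''.support := by
    rw [Nat.card_coe_set_eq]
    rw [Set.ncard_pos (Set.toFinite _)]
    exact ⟨a0, (H''.mem_support).mpr ⟨w0, hadj0⟩⟩
  -- max degree bound
  have hMle : H''.maxDegree ≤ 400 * T ^ 2 := by
    refine H''.maxDegree_le_of_forall_degree_le _ fun v => ?_
    rcases hAB v with hvA | hvB
    · have hsub : H''.neighborFinset v ⊆ H.neighborFinset v := by
        intro w hw
        rw [SimpleGraph.mem_neighborFinset] at hw ⊢
        exact hw.1
      calc H''.degree v ≤ H.degree v := by
            rw [← H''.card_neighborFinset_eq_degree, ← H.card_neighborFinset_eq_degree]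
            exact Finset.card_le_card hsub
        _ ≤ T := (hA' v hvA).2
        _ ≤ 400 * T ^ 2 := by nlinarith
    · have hsub : H''.neighborFinset v ⊆ H.neighborFinset v ∩ A' := by
        intro w hw
        rw [SimpleGraph.mem_neighborFinset] at hw
        rw [Finset.mem_inter, SimpleGraph.mem_neighborFinset]
        refine ⟨hw.1, ?_⟩
        rcases hw.2 with h | h
        · exact (hnotboth v (hA'A v h) hvB).elim
        · exact h
      calc H''.degree v ≤ (H.neighborFinset v ∩ A').card := by
            rw [← H''.card_neighborFinset_eq_degree]
            exact Finset.card_le_card hsub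
        _ ≤ 400 * T ^ 2 := hA'cap v
  have hM1 : 1 ≤ H''.maxDegree := by
    have h1 : 1 ≤ H''.degree a0 := by rw [hdegeq a0 ha0]; omega
    exact le_trans h1 (H''.degree_le_maxDegree a0)
  -- final real arithmetic
  rw [hmax H'' inferInstance]
  have hk1 : (1 : ℝ) ≤ (A'.card : ℝ) := by exact_mod_cast Nat.succ_le_of_lt (Finset.card_pos.mpr ⟨a0, ha0⟩)
  have hb : (200 : ℝ) * (Bf.card : ℝ) ≤ 201 * (A'.card : ℝ) := by exact_mod_cast hF9
  have hn : ((Nat.card H''.support : ℕ) : ℝ) ≤ (A'.card : ℝ) + (Bf.card : ℝ) := by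
    exact_mod_cast hscard
  have hnpos : (0 : ℝ) < ((Nat.card H''.support : ℕ) : ℝ) := by exact_mod_cast hsprt
  have he : (t : ℝ) * (A'.card : ℝ) ≤ 2 * ((Nat.card H''.edgeSet : ℕ) : ℝ) := by
    exact_mod_cast hElower
  have hMC : ((H''.maxDegree : ℕ) : ℝ) ≤ ((400 * T ^ 2 : ℕ) : ℝ) := by exact_mod_cast hMle
  have hM1R : (1 : ℝ) ≤ ((H''.maxDegree : ℕ) : ℝ) := by exact_mod_cast hM1
  have hlogC : Real.log (((400 * T ^ 2 : ℕ) : ℝ)) = 2 * Real.log (20 * (T : ℝ)) := by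
    have : (((400 * T ^ 2 : ℕ) : ℝ)) = (20 * (T : ℝ)) ^ 2 := by push_cast; ring
    rw [this, Real.log_pow]
    push_cast
    ring
  have h1 : α * Real.log ((H''.maxDegree : ℕ) : ℝ) ≤ (t : ℝ) / 3 := by
    have hlogle : Real.log ((H''.maxDegree : ℕ) : ℝ) ≤ Real.log (((400 * T ^ 2 : ℕ) : ℝ)) :=
      Real.log_le_log (by linarith) hMC
    calc α * Real.log ((H''.maxDegree : ℕ) : ℝ)
        ≤ α * Real.log (((400 * T ^ 2 : ℕ) : ℝ)) := by
          exact mul_le_mul_of_nonneg_left hlogle (le_of_lt hα)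
      _ = (6 * α * Real.log (20 * (T : ℝ))) / 3 := by rw [hlogC]; ring
      _ ≤ (t : ℝ) / 3 := by linarith
  have hnk : ((Nat.card H''.support : ℕ) : ℝ) ≤ (401 / 200) * (A'.card : ℝ) := by linarith
  have h2e : (200 / 401) * (t : ℝ) ≤
      2 * ((Nat.card H''.edgeSet : ℕ) : ℝ) / ((Nat.card H''.support : ℕ) : ℝ) := by
    rw [le_div_iff₀ hnpos]
    have ht0 : (0 : ℝ) ≤ 200 / 401 * (t : ℝ) := by positivity
    have hstep := mul_le_mul_of_nonneg_left hnk ht0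
    have heq : 200 / 401 * (t : ℝ) * (401 / 200 * (A'.card : ℝ)) = (t : ℝ) * (A'.card : ℝ) := by
      ring
    linarith
  have ht1 : (1 : ℝ) ≤ (t : ℝ) := by exact_mod_cast ht
  refine lt_of_le_of_lt h1 ?_
  refine lt_of_lt_of_le ?_ h2e
  linarith
end

section
/- There exists a constant C > 0 such that for every nonzero polynomial p with integer coefficients of degree k ≥ 2 and every pair of distinct complex roots u ≠ v of p, one has −log|u − v| ≤ C·k³·(a(p) + log k), where a(p) denotes the natural logarithm of the maximum of the absolute values of the coefficients of p. -/
open Polynomial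

noncomputable def Complex.abs : AbsoluteValue ℂ ℝ := NormedField.toAbsoluteValue ℂ

theorem Complex.abs_intCast (n : ℤ) : Complex.abs (n : ℂ) = |(n : ℝ)| := by
  show ‖(n : ℂ)‖ = |(n : ℝ)|; simp

theorem Complex.abs_ofReal (r : ℝ) : Complex.abs (r : ℂ) = |r| := by
  show ‖(r : ℂ)‖ = |r|; simp

theorem root_bound (p : Polynomial ℤ) (hp : p ≠ 0) (hd : 1 ≤ p.natDegree) (z : ℂ) (hz : Polynomial.aeval z p = 0) :
    Complex.abs z ≤ (p.natDegree : ℝ) *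
      (((Finset.range (p.natDegree + 1)).sup (fun i => (p.coeff i).natAbs) : ℕ) : ℝ) + 1 := by
  set k := p.natDegree with hk
  set H : ℕ := (Finset.range (k + 1)).sup (fun i => (p.coeff i).natAbs) with hH
  have hH1 : 1 ≤ H := by
    have : (p.coeff k).natAbs ≤ H := Finset.le_sup (f := fun i => (p.coeff i).natAbs) (Finset.self_mem_range_succ k)
    have hc : p.coeff k ≠ 0 := by
      simpa [hk] using Polynomial.leadingCoeff_ne_zero.mpr hp
    omega
  have hHr : (1:ℝ) ≤ (H:ℝ) := by exact_mod_cast hH1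
  by_cases h1 : Complex.abs z ≤ 1
  · nlinarith [Nat.cast_nonneg (α := ℝ) k]
  push_neg at h1
  have hzpos : (0:ℝ) < Complex.abs z := by linarith
  -- expand aeval as sum
  have hsum : ∑ i ∈ Finset.range (k + 1), (p.coeff i : ℂ) * z ^ i = 0 := by
    have := Polynomial.aeval_eq_sum_range (R := ℤ) (S := ℂ) (p := p) (x := z)
    rw [this] at hz
    simpa [zsmul_eq_mul] using hz
  have hsplit : (p.coeff k : ℂ) * z ^ k = -∑ i ∈ Finset.range k, (p.coeff i : ℂ) * z ^ i := by
    have := Finset.sum_range_succ (fun i => (p.coeff i : ℂ) * z ^ i) k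
    rw [this] at hsum
    linear_combination hsum
  have hcoeffs : ∀ i ∈ Finset.range (k+1), Complex.abs (p.coeff i : ℂ) ≤ (H:ℝ) := by
    intro i hi
    have : (p.coeff i).natAbs ≤ H := Finset.le_sup (f := fun i => (p.coeff i).natAbs) hi
    rw [Complex.abs_intCast]
    calc |(p.coeff i : ℝ)| = ((p.coeff i).natAbs : ℝ) := by
          rw [Nat.cast_natAbs]; push_cast; ring_nf
      _ ≤ (H:ℝ) := by exact_mod_cast this
  have hlc : (1:ℝ) ≤ Complex.abs (p.coeff k : ℂ) := by
    have hc : p.coeff k ≠ 0 := by simpa [hk] using Polynomial.leadingCoeff_ne_zero.mpr hp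
    rw [Complex.abs_intCast]
    exact_mod_cast Int.one_le_abs (by exact_mod_cast hc)
  have hbound : Complex.abs ((p.coeff k : ℂ) * z ^ k) ≤ (k:ℝ) * H * Complex.abs z ^ (k-1) := by
    rw [hsplit]
    rw [AbsoluteValue.map_neg]
    calc Complex.abs (∑ i ∈ Finset.range k, (p.coeff i : ℂ) * z ^ i)
        ≤ ∑ i ∈ Finset.range k, Complex.abs ((p.coeff i : ℂ) * z ^ i) := by
          exact AbsoluteValue.sum_le _ _ _
      _ ≤ ∑ i ∈ Finset.range k, (H:ℝ) * Complex.abs z ^ (k-1) := by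
          apply Finset.sum_le_sum
          intro i hi
          rw [map_mul, map_pow]
          have h1' : Complex.abs (p.coeff i : ℂ) ≤ (H:ℝ) :=
            hcoeffs i (Finset.mem_range.mpr (by have := Finset.mem_range.mp hi; omega))
          have h2' : Complex.abs z ^ i ≤ Complex.abs z ^ (k-1) := by
            apply pow_le_pow_right₀ (by linarith)
            have := Finset.mem_range.mp hi; omega
          have := pow_nonneg (le_of_lt hzpos) i
          nlinarith
      _ = (k:ℝ) * H * Complex.abs z ^ (k-1) := by
          rw [Finset.sum_const, Finset.card_range]; push_cast; ring
  have hzk : Complex.abs ((p.coeff k : ℂ) * z ^ k) = Complex.abs (p.coeff k : ℂ) * Complex.abs z ^ k := by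
    rw [map_mul, map_pow]
  have hkpos : Complex.abs z ^ k = Complex.abs z * Complex.abs z ^ (k-1) := by
    rw [← pow_succ']
    congr 1; omega
  have hpowpos : (0:ℝ) < Complex.abs z ^ (k-1) := pow_pos hzpos _
  rw [hzk, hkpos] at hbound
  have : Complex.abs z ≤ (k:ℝ) * H := by
    have h2 : Complex.abs (p.coeff k : ℂ) * (Complex.abs z * Complex.abs z ^ (k-1)) ≥
        1 * (Complex.abs z * Complex.abs z ^ (k-1)) := by
      apply mul_le_mul_of_nonneg_right hlc
      positivity
    nlinarith
  linarith

set_option maxHeartbeats 1000000 in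
/-- Distinct complex roots of an integer polynomial of degree k ≥ 2 cannot be too close:
−log|u − v| ≤ C·k³·(a(p) + log k), where a(p) is the log of the largest absolute value of
a coefficient of p. -/
theorem stmt14 :
    ∃ C : ℝ, 0 < C ∧
      ∀ p : Polynomial ℤ, p ≠ 0 → 2 ≤ p.natDegree →
        ∀ u v : ℂ, Polynomial.aeval u p = 0 → Polynomial.aeval v p = 0 → u ≠ v →
          -Real.log (‖u - v‖) ≤
            C * (p.natDegree : ℝ) ^ 3 *
              (Real.log (((Finset.range (p.natDegree + 1)).sup
                  (fun i => (p.coeff i).natAbs) : ℕ) : ℝ) +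
                Real.log (p.natDegree : ℝ)) := by
  refine ⟨4, by norm_num, ?_⟩
  intro p hp hk2 u v hu hv huv
  change -Real.log (Complex.abs (u - v)) ≤ _
  classical
  set k := p.natDegree with hkdef
  set H : ℕ := (Finset.range (k + 1)).sup (fun i => (p.coeff i).natAbs) with hHdef
  have hc0 : p.leadingCoeff ≠ 0 := Polynomial.leadingCoeff_ne_zero.mpr hp
  have hH1 : 1 ≤ H := by
    have : (p.coeff k).natAbs ≤ H :=
      Finset.le_sup (f := fun i => (p.coeff i).natAbs) (Finset.self_mem_range_succ k)
    have hc : p.coeff k ≠ 0 := by simpa [hkdef] using hc0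
    omega
  have hHr : (1:ℝ) ≤ (H:ℝ) := by exact_mod_cast hH1
  have hkr : (2:ℝ) ≤ (k:ℝ) := by exact_mod_cast hk2
  -- the splitting field
  have hP0 : p.map (algebraMap ℤ ℚ) ≠ 0 :=
    (Polynomial.map_ne_zero_iff ((algebraMap ℤ ℚ).injective_int)).mpr hp
  set K := (p.map (algebraMap ℤ ℚ)).SplittingField with hKdef
  haveI : CharZero K := charZero_of_injective_algebraMap (algebraMap ℚ K).injective
  have hmap : p.map (algebraMap ℤ K) = (p.map (algebraMap ℤ ℚ)).map (algebraMap ℚ K) := by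
    rw [Polynomial.map_map]
    congr 1
    try exact Subsingleton.elim _ _
  have hpK0 : p.map (algebraMap ℤ K) ≠ 0 := by
    rw [hmap]
    exact (Polynomial.map_ne_zero_iff (algebraMap ℚ K).injective).mpr hP0
  have hsplits : (p.map (algebraMap ℤ K)).Splits := by
    rw [hmap]
    exact Polynomial.SplittingField.splits (p.map (algebraMap ℤ ℚ))
  -- the embedding into ℂ
  let φ : K →ₐ[ℚ] ℂ := IsAlgClosed.lift
  have hφinj : Function.Injective φ := φ.toRingHom.injective
  -- roots correspondence
  have hmapC : p.map (algebraMap ℤ ℂ) = (p.map (algebraMap ℤ K)).map φ.toRingHom := by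
    rw [Polynomial.map_map]
    congr 1
    exact Subsingleton.elim _ _
  have hroots : (p.map (algebraMap ℤ ℂ)).roots
      = (p.map (algebraMap ℤ K)).roots.map φ := by
    rw [hmapC]
    exact hsplits.roots_map φ.toRingHom
  have hpC0 : p.map (algebraMap ℤ ℂ) ≠ 0 :=
    (Polynomial.map_ne_zero_iff ((algebraMap ℤ ℂ).injective_int)).mpr hp
  have hmemroots : ∀ z : ℂ, Polynomial.aeval z p = 0 →
      z ∈ (p.map (algebraMap ℤ ℂ)).roots := by
    intro z hz
    rw [Polynomial.mem_roots hpC0, Polynomial.IsRoot, Polynomial.eval_map,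
      ← Polynomial.aeval_def]
    exact hz
  obtain ⟨wu, hwu, hwu'⟩ := Multiset.mem_map.mp (hroots ▸ hmemroots u hu)
  obtain ⟨wv, hwv, hwv'⟩ := Multiset.mem_map.mp (hroots ▸ hmemroots v hv)
  have hwne : wu ≠ wv := fun h => huv (by rw [← hwu', ← hwv', h])
  -- the set of distinct roots in K
  set S : Finset K := (p.map (algebraMap ℤ K)).roots.toFinset with hSdef
  have hwuS : wu ∈ S := Multiset.mem_toFinset.mpr hwu
  have hwvS : wv ∈ S := Multiset.mem_toFinset.mpr hwv
  set c : ℤ := p.leadingCoeff with hcdef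
  set N : K := ∏ z ∈ S.offDiag, ((c : K) * z.1 - (c : K) * z.2) with hNdef
  -- roots are characterized by aeval
  have hSaeval : ∀ z ∈ S, Polynomial.aeval z p = 0 := by
    intro z hz
    have := (Polynomial.mem_roots hpK0).mp (Multiset.mem_toFinset.mp hz)
    rwa [Polynomial.IsRoot, Polynomial.eval_map, ← Polynomial.aeval_def] at this
  have haevalS : ∀ z : K, Polynomial.aeval z p = 0 → z ∈ S := by
    intro z hz
    exact Multiset.mem_toFinset.mpr ((Polynomial.mem_roots hpK0).mpr
      (by rw [Polynomial.IsRoot, Polynomial.eval_map, ← Polynomial.aeval_def]; exact hz))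
  -- Galois invariance of N
  haveI : Normal ℚ K := Polynomial.SplittingField.instNormal _
  haveI : IsGalois ℚ K := ⟨⟩
  have hmemS : ∀ (τ : K ≃ₐ[ℚ] K) (x : K), x ∈ S → τ x ∈ S := by
    intro τ x hx
    apply haevalS
    rw [show τ x = (τ.toAlgHom.restrictScalars ℤ) x from rfl,
      Polynomial.aeval_algHom_apply, hSaeval _ hx, map_zero]
  have hfix : ∀ σ : K ≃ₐ[ℚ] K, σ N = N := by
    intro σ
    have hstep : σ N = ∏ z ∈ S.offDiag, ((c : K) * σ z.1 - (c : K) * σ z.2) := by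
      rw [hNdef, map_prod]
      exact Finset.prod_congr rfl fun z _ => by
        rw [map_sub, map_mul, map_mul, map_intCast]
    rw [hstep, hNdef]
    refine Finset.prod_nbij' (i := fun z => (σ z.1, σ z.2))
      (j := fun z => (σ.symm z.1, σ.symm z.2)) ?_ ?_ ?_ ?_ ?_
    · intro a ha
      obtain ⟨h1, h2, h3⟩ := Finset.mem_offDiag.mp ha
      exact Finset.mem_offDiag.mpr ⟨hmemS σ _ h1, hmemS σ _ h2, fun h => h3 (σ.injective h)⟩
    · intro a ha
      obtain ⟨h1, h2, h3⟩ := Finset.mem_offDiag.mp ha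
      exact Finset.mem_offDiag.mpr ⟨hmemS σ.symm _ h1, hmemS σ.symm _ h2,
        fun h => h3 (σ.symm.injective h)⟩
    · intro a _; simp
    · intro a _; simp
    · intro a _; rfl
  -- N is rational
  have hNbot : N ∈ (⊥ : IntermediateField ℚ K) := by
    have htop : IntermediateField.fixedField (⊤ : Subgroup (K ≃ₐ[ℚ] K)) = ⊥ :=
      ((IsGalois.tfae (F := ℚ) (E := K)).out 0 1 rfl rfl).mp inferInstance
    rw [← htop]
    intro g
    exact hfix g.1
  obtain ⟨q, hq⟩ := IntermediateField.mem_bot.mp hNbot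
  -- N is nonzero
  have hcK : (c : K) ≠ 0 := Int.cast_ne_zero.mpr hc0
  have hN0 : N ≠ 0 := by
    rw [hNdef]
    apply Finset.prod_ne_zero_iff.mpr
    intro z hz
    obtain ⟨-, -, h3⟩ := Finset.mem_offDiag.mp hz
    intro h
    apply h3
    have : (c:K) * z.1 = (c:K) * z.2 := by linear_combination h
    exact mul_left_cancel₀ hcK this
  -- N is an algebraic integer
  have hint : ∀ x ∈ S, IsIntegral ℤ ((c : K) * x) := by
    intro x hx
    have hx0 := hSaeval x hx
    have := Polynomial.integralNormalization_aeval_eq_zero hx0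
      (fun a ha => by exact_mod_cast (algebraMap ℤ K).injective_int (by simpa using ha))
    refine ⟨Polynomial.integralNormalization p, Polynomial.monic_integralNormalization hp, ?_⟩
    rw [← Polynomial.aeval_def]
    simpa [hcdef, algebraMap_int_eq] using this
  have hNint : IsIntegral ℤ N := by
    rw [hNdef]
    apply IsIntegral.prod
    intro z hz
    obtain ⟨h1, h2, -⟩ := Finset.mem_offDiag.mp hz
    exact (hint _ h1).sub (hint _ h2)
  -- hence q is an integer
  have hqint : IsIntegral ℤ q := by
    rw [← isIntegral_algebraMap_iff (algebraMap ℚ K).injective, hq]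
    exact hNint
  obtain ⟨n, hn⟩ := IsIntegrallyClosed.isIntegral_iff.mp hqint
  have hq0 : q ≠ 0 := fun h => hN0 (by rw [← hq, h, map_zero])
  have hn0 : n ≠ 0 := fun h => hq0 (by rw [← hn, h]; simp)
  -- the complex absolute value of N is at least 1
  have hφN : Complex.abs (φ N) = |(q : ℝ)| := by
    rw [← hq]
    have : φ (algebraMap ℚ K q) = (q : ℂ) := by
      rw [AlgHom.commutes]; simp
    rw [this, show ((q:ℂ)) = (((q:ℝ)):ℂ) by push_cast; ring, Complex.abs_ofReal]
  have habs1 : (1:ℝ) ≤ Complex.abs (φ N) := by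
    rw [hφN, ← hn]
    simp only [eq_intCast]
    push_cast
    exact_mod_cast Int.one_le_abs hn0
  -- transfer roots to ℂ and bound
  have haevφ : ∀ x : K, Polynomial.aeval x p = 0 → Polynomial.aeval (φ x) p = 0 := by
    intro x hx
    rw [show φ x = (φ.restrictScalars ℤ) x from rfl, Polynomial.aeval_algHom_apply, hx, map_zero]
  set d : ℝ := Complex.abs (u - v) with hddef
  have hd0 : 0 < d := by
    rw [hddef]; exact AbsoluteValue.pos _ (sub_ne_zero.mpr huv)
  set B : ℝ := 2 * (H:ℝ) * ((k:ℝ) * (H:ℝ) + 1) with hBdef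
  have hkH : (2:ℝ) ≤ (k:ℝ) * (H:ℝ) := by nlinarith
  have hB1 : (1:ℝ) ≤ B := by rw [hBdef]; nlinarith [hkH, hHr]
  set g : K × K → ℝ := fun z => Complex.abs ((c:ℂ) * φ z.1 - (c:ℂ) * φ z.2) with hgdef
  have hφNprod : φ N = ∏ z ∈ S.offDiag, ((c:ℂ) * φ z.1 - (c:ℂ) * φ z.2) := by
    rw [hNdef, map_prod]
    exact Finset.prod_congr rfl fun z _ => by rw [map_sub, map_mul, map_mul, map_intCast]
  have hprod : Complex.abs (φ N) = ∏ z ∈ S.offDiag, g z := by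
    rw [hφNprod]
    exact map_prod Complex.abs _ _
  have hcabs : Complex.abs ((c:ℂ)) ≤ (H:ℝ) := by
    rw [Complex.abs_intCast]
    have h1 : c.natAbs ≤ H := by
      have h2 : (p.coeff k).natAbs ≤ H :=
        Finset.le_sup (f := fun i => (p.coeff i).natAbs) (Finset.self_mem_range_succ k)
      exact h2
    have h3 : ((c.natAbs : ℕ) : ℝ) ≤ (H : ℝ) := by exact_mod_cast h1
    rw [← Int.cast_abs, Int.abs_eq_natAbs]
    exact_mod_cast h1
  have hgB : ∀ z ∈ S.offDiag, g z ≤ B := by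
    intro z hz
    obtain ⟨h1, h2, -⟩ := Finset.mem_offDiag.mp hz
    have r1 : Complex.abs (φ z.1) ≤ (k:ℝ) * (H:ℝ) + 1 :=
      root_bound p hp (by omega) _ (haevφ _ (hSaeval _ h1))
    have r2 : Complex.abs (φ z.2) ≤ (k:ℝ) * (H:ℝ) + 1 :=
      root_bound p hp (by omega) _ (haevφ _ (hSaeval _ h2))
    have tri : Complex.abs ((c:ℂ) * φ z.1 - (c:ℂ) * φ z.2)
        ≤ Complex.abs ((c:ℂ) * φ z.1) + Complex.abs ((c:ℂ) * φ z.2) := by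
      simpa [sub_eq_add_neg, AbsoluteValue.map_neg] using
        Complex.abs.add_le ((c:ℂ) * φ z.1) (-((c:ℂ) * φ z.2))
    rw [map_mul, map_mul] at tri
    have a1 := AbsoluteValue.nonneg Complex.abs (φ z.1)
    have a2 := AbsoluteValue.nonneg Complex.abs (φ z.2)
    have a3 := AbsoluteValue.nonneg Complex.abs ((c:ℂ))
    have hk0 : (0:ℝ) ≤ (k:ℝ) := by positivity
    show Complex.abs ((c:ℂ) * φ z.1 - (c:ℂ) * φ z.2) ≤ B
    rw [hBdef]
    nlinarith
  -- split off the two special factors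
  have haT : (wu, wv) ∈ S.offDiag := Finset.mem_offDiag.mpr ⟨hwuS, hwvS, hwne⟩
  have hbT : (wv, wu) ∈ S.offDiag.erase (wu, wv) := Finset.mem_erase.mpr
    ⟨fun h => hwne (congrArg Prod.fst h).symm,
     Finset.mem_offDiag.mpr ⟨hwvS, hwuS, hwne.symm⟩⟩
  have hsplit1 : ∏ z ∈ S.offDiag, g z
      = g (wu, wv) * ∏ z ∈ S.offDiag.erase (wu, wv), g z :=
    (Finset.mul_prod_erase _ g haT).symm
  have hsplit2 : ∏ z ∈ S.offDiag.erase (wu, wv), g z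
      = g (wv, wu) * ∏ z ∈ (S.offDiag.erase (wu, wv)).erase (wv, wu), g z :=
    (Finset.mul_prod_erase _ g hbT).symm
  -- cardinality bound
  have hcardS : S.card ≤ k := by
    calc S.card ≤ Multiset.card (p.map (algebraMap ℤ K)).roots := Multiset.toFinset_card_le _
      _ ≤ (p.map (algebraMap ℤ K)).natDegree := Polynomial.card_roots' _
      _ ≤ k := Polynomial.natDegree_map_le
  have hcard : ((S.offDiag.erase (wu, wv)).erase (wv, wu)).card ≤ k * k := by
    calc ((S.offDiag.erase (wu, wv)).erase (wv, wu)).card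
        ≤ (S.offDiag.erase (wu, wv)).card := Finset.card_erase_le
      _ ≤ S.offDiag.card := Finset.card_erase_le
      _ = S.card * S.card - S.card := Finset.offDiag_card _
      _ ≤ k * k := by have := Nat.mul_le_mul hcardS hcardS; omega
  have hrest : ∏ z ∈ (S.offDiag.erase (wu, wv)).erase (wv, wu), g z ≤ B ^ (k * k) := by
    calc ∏ z ∈ (S.offDiag.erase (wu, wv)).erase (wv, wu), g z
        ≤ B ^ ((S.offDiag.erase (wu, wv)).erase (wv, wu)).card := by
          rw [← Finset.prod_const]
          exact Finset.prod_le_prod (fun z _ => AbsoluteValue.nonneg _ _)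
            (fun z hz => hgB z (Finset.mem_of_mem_erase (Finset.mem_of_mem_erase hz)))
      _ ≤ B ^ (k * k) := pow_le_pow_right₀ hB1 hcard
  have hrest0 : (0:ℝ) ≤ ∏ z ∈ (S.offDiag.erase (wu, wv)).erase (wv, wu), g z :=
    Finset.prod_nonneg fun z _ => AbsoluteValue.nonneg _ _
  have hga : g (wu, wv) ≤ (H:ℝ) * d := by
    show Complex.abs ((c:ℂ) * φ wu - (c:ℂ) * φ wv) ≤ (H:ℝ) * d
    rw [hwu', hwv', show (c:ℂ) * u - (c:ℂ) * v = (c:ℂ) * (u - v) by ring, map_mul]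
    exact mul_le_mul_of_nonneg_right hcabs (AbsoluteValue.nonneg _ _)
  have hgb : g (wv, wu) ≤ (H:ℝ) * d := by
    show Complex.abs ((c:ℂ) * φ wv - (c:ℂ) * φ wu) ≤ (H:ℝ) * d
    rw [hwu', hwv', show (c:ℂ) * v - (c:ℂ) * u = -((c:ℂ) * (u - v)) by ring,
      AbsoluteValue.map_neg, map_mul]
    exact mul_le_mul_of_nonneg_right hcabs (AbsoluteValue.nonneg _ _)
  have hga0 : (0:ℝ) ≤ g (wu, wv) := AbsoluteValue.nonneg _ _
  have hgb0 : (0:ℝ) ≤ g (wv, wu) := AbsoluteValue.nonneg _ _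
  have hHd0 : (0:ℝ) ≤ (H:ℝ) * d := by positivity
  -- the key inequality
  have hkey : (1:ℝ) ≤ ((H:ℝ) * d) * (((H:ℝ) * d) * B ^ (k * k)) := by
    have e1 : g (wv, wu) * ∏ z ∈ (S.offDiag.erase (wu, wv)).erase (wv, wu), g z
        ≤ ((H:ℝ) * d) * B ^ (k * k) := mul_le_mul hgb hrest hrest0 hHd0
    have e2 : Complex.abs (φ N) ≤ ((H:ℝ) * d) * (((H:ℝ) * d) * B ^ (k * k)) := by
      rw [hprod, hsplit1, hsplit2]
      exact mul_le_mul hga e1 (mul_nonneg hgb0 hrest0) hHd0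
    linarith
  -- take logarithms
  have hH0' : (0:ℝ) < (H:ℝ) := by linarith
  have hB0 : (0:ℝ) < B := by linarith
  have hkey2 : -2 * Real.log d ≤ 2 * Real.log (H:ℝ) + ((k:ℝ) * (k:ℝ)) * Real.log B := by
    have hl := Real.log_le_log (by norm_num) hkey
    rw [Real.log_one] at hl
    rw [Real.log_mul (by positivity) (by positivity),
      Real.log_mul (by positivity) (by positivity),
      Real.log_mul (by positivity) (by positivity),
      Real.log_mul (by positivity) (by positivity), Real.log_pow] at hl
    push_cast at hl
    linarith
  have hlogH : 0 ≤ Real.log (H:ℝ) := Real.log_nonneg hHr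
  have hlog2 : Real.log 2 ≤ Real.log (k:ℝ) := Real.log_le_log (by norm_num) hkr
  have hlogk0 : 0 ≤ Real.log (k:ℝ) := le_trans (Real.log_nonneg (by norm_num)) hlog2
  have hBle : B ≤ 4 * (k:ℝ) * (H:ℝ)^2 := by rw [hBdef]; nlinarith
  have hlogB : Real.log B ≤ 3 * Real.log (k:ℝ) + 2 * Real.log (H:ℝ) := by
    have h1 : Real.log B ≤ Real.log (4 * (k:ℝ) * (H:ℝ)^2) := Real.log_le_log hB0 hBle
    have h2 : Real.log (4 * (k:ℝ) * (H:ℝ)^2)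
        = Real.log 4 + Real.log (k:ℝ) + 2 * Real.log (H:ℝ) := by
      rw [Real.log_mul (by positivity) (by positivity),
        Real.log_mul (by norm_num) (by positivity), Real.log_pow]
      push_cast; ring
    have h3 : Real.log 4 ≤ 2 * Real.log (k:ℝ) := by
      have h4 : Real.log 4 = 2 * Real.log 2 := by
        rw [show (4:ℝ) = 2^2 by norm_num, Real.log_pow]; push_cast; ring
      linarith
    linarith
  -- final arithmetic
  have hkey3 : -2 * Real.log d ≤ 2 * Real.log (H:ℝ)
      + ((k:ℝ) * (k:ℝ)) * (3 * Real.log (k:ℝ) + 2 * Real.log (H:ℝ)) := by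
    have : ((k:ℝ) * (k:ℝ)) * Real.log B
        ≤ ((k:ℝ) * (k:ℝ)) * (3 * Real.log (k:ℝ) + 2 * Real.log (H:ℝ)) := by
      apply mul_le_mul_of_nonneg_left hlogB (by positivity)
    linarith
  have hk3 : (8:ℝ) ≤ (k:ℝ)^3 := by nlinarith
  have f1 : 2 * Real.log (H:ℝ) ≤ (k:ℝ)^3 * Real.log (H:ℝ) := by nlinarith
  have f2 : 2 * ((k:ℝ)*(k:ℝ)) * Real.log (H:ℝ) ≤ (k:ℝ)^3 * Real.log (H:ℝ) := by nlinarith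
  have f3 : 3 * ((k:ℝ)*(k:ℝ)) * Real.log (k:ℝ) ≤ 2 * (k:ℝ)^3 * Real.log (k:ℝ) := by
    nlinarith [mul_nonneg (mul_nonneg (show (0:ℝ) ≤ (k:ℝ)*(k:ℝ) by positivity)
      (show (0:ℝ) ≤ 2*(k:ℝ)-3 by linarith)) hlogk0]
  have f4 : 0 ≤ (k:ℝ)^3 * Real.log (H:ℝ) := by positivity
  have f5 : 0 ≤ (k:ℝ)^3 * Real.log (k:ℝ) := by positivity
  nlinarith [hkey3, f1, f2, f3, f4, f5]
end

section
/- Let d ≥ 1 and let G be a finite simple graph of maximum degree d + 1 such that the distance between every pair of distinct vertices of degree d + 1 is at least three. Then ρ(G) ≤ ((d+1)(d²+1))^{1/3}. -/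
open scoped Matrix

/-- Sum bound when at most one term exceeds `A`, all terms at most `B`. -/
lemma aux_sum_one_exception {V : Type*} [DecidableEq V] (s : Finset V) (f : V → ℕ) (A B : ℕ)
    (h1 : ∀ w ∈ s, f w ≤ B)
    (h2 : ∀ w1 ∈ s, ∀ w2 ∈ s, ¬ f w1 ≤ A → ¬ f w2 ≤ A → w1 = w2) :
    ∑ w ∈ s, f w ≤ A * s.card + B := by
  by_cases hex : ∃ w0 ∈ s, ¬ f w0 ≤ A
  · obtain ⟨w0, hw0s, hw0⟩ := hex
    rw [← Finset.add_sum_erase s f hw0s]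
    have h3 : ∑ w ∈ s.erase w0, f w ≤ (s.erase w0).card * A := by
      refine Finset.sum_le_card_nsmul _ _ _ ?_
      intro w hw
      obtain ⟨hwne, hws⟩ := Finset.mem_erase.mp hw
      by_contra hc
      exact hwne (h2 w hws w0 hw0s hc hw0)
    have h4 : (s.erase w0).card * A ≤ s.card * A :=
      Nat.mul_le_mul_right _ (Finset.card_erase_le)
    have h5 := h1 w0 hw0s
    calc f w0 + ∑ w ∈ s.erase w0, f w ≤ B + s.card * A := by
          exact add_le_add h5 (h3.trans h4)
      _ = A * s.card + B := by ring
  · push_neg at hex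
    calc ∑ w ∈ s, f w ≤ s.card * A := Finset.sum_le_card_nsmul _ _ _ hex
      _ ≤ A * s.card + B := by rw [mul_comm]; exact Nat.le_add_right _ _

/-- If G has maximum degree d+1 and every two distinct vertices of degree d+1 are at
distance at least three, then ρ(G) ≤ ((d+1)(d²+1))^(1/3). -/
theorem stmt15 {V : Type*} [Fintype V] [DecidableEq V] (d : ℕ) (hd : 1 ≤ d)
    (G : SimpleGraph V) (hΔ : maxDeg G = d + 1)
    (hdist : ∀ u v : V, u ≠ v → deg G u = d + 1 → deg G v = d + 1 → 3 ≤ G.dist u v) :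
    specRad G ≤ (((d : ℝ) + 1) * ((d : ℝ) ^ 2 + 1)) ^ ((1 : ℝ) / 3) := by
  classical
  have hdist' : ∀ u v : V, u ≠ v → G.degree u = d + 1 → G.degree v = d + 1 → 3 ≤ G.dist u v :=
    hdist
  have hΔ' : G.maxDegree = d + 1 := hΔ
  have hdeg : ∀ v : V, G.degree v ≤ d + 1 := fun v => hΔ' ▸ G.degree_le_maxDegree v
  set M : ℝ := ((d : ℝ) + 1) * ((d : ℝ) ^ 2 + 1) with hMdef
  have hM0 : (0 : ℝ) ≤ M := by positivity
  set A : Matrix V V ℝ := G.adjMatrix ℝ with hAdef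
  -- adjacency implies small neighbor of big vertex
  have hadj_small : ∀ {a b : V}, G.Adj a b → G.degree a = d + 1 → G.degree b ≤ d := by
    intro a b hab ha
    by_contra hc
    have hb : G.degree b = d + 1 := le_antisymm (hdeg b) (by omega)
    have h1 : G.dist a b ≤ 1 := by
      simpa using SimpleGraph.dist_le (SimpleGraph.Walk.cons hab SimpleGraph.Walk.nil)
    have := hdist' a b hab.ne ha hb
    omega
  -- two ends of a path of length two can't both be big
  have hdist2 : ∀ {a b c : V}, G.Adj a b → G.Adj b c → a ≠ c →
      G.degree a = d + 1 → G.degree c = d + 1 → False := by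
    intro a b c hab hbc hac h1 h2
    have hle : G.dist a c ≤ 2 := by
      simpa using SimpleGraph.dist_le
        (SimpleGraph.Walk.cons hab (SimpleGraph.Walk.cons hbc SimpleGraph.Walk.nil))
    have := hdist' a c hac h1 h2
    omega
  -- the key combinatorial bound on walks of length 3
  have key : ∀ v : V, ∑ u ∈ G.neighborFinset v, ∑ w ∈ G.neighborFinset u, G.degree w
      ≤ (d + 1) * (d ^ 2 + 1) := by
    intro v
    by_cases hv : G.degree v = d + 1
    · -- v is big: each neighbor u is small, and within N(u) only v is big
      have hu : ∀ u ∈ G.neighborFinset v, ∑ w ∈ G.neighborFinset u, G.degree w ≤ d ^ 2 + 1 := by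
        intro u hu
        rw [SimpleGraph.mem_neighborFinset] at hu
        have hdu : G.degree u ≤ d := hadj_small hu hv
        have hvmem : v ∈ G.neighborFinset u := (SimpleGraph.mem_neighborFinset _ _ _).mpr hu.symm
        rw [← Finset.add_sum_erase _ _ hvmem, hv]
        have hsmall : ∑ w ∈ (G.neighborFinset u).erase v, G.degree w
            ≤ ((G.neighborFinset u).erase v).card * d := by
          refine Finset.sum_le_card_nsmul _ _ _ ?_
          intro w hw
          obtain ⟨hwv, hwmem⟩ := Finset.mem_erase.mp hw
          rw [SimpleGraph.mem_neighborFinset] at hwmem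
          by_contra hc
          have hwd : G.degree w = d + 1 := le_antisymm (hdeg w) (by omega)
          exact hdist2 hu hwmem (Ne.symm hwv) hv hwd
        have hcarde : ((G.neighborFinset u).erase v).card ≤ d - 1 := by
          rw [Finset.card_erase_of_mem hvmem, G.card_neighborFinset_eq_degree]
          omega
        obtain ⟨e, rfl⟩ : ∃ e, d = e + 1 := ⟨d - 1, by omega⟩
        have h6 : ((G.neighborFinset u).erase v).card * (e + 1) ≤ e * (e + 1) := by
          have : ((G.neighborFinset u).erase v).card ≤ e := by omega
          exact Nat.mul_le_mul_right _ this
        have h7 : (e + 1 + 1) + e * (e + 1) = (e + 1) ^ 2 + 1 := by ring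
        omega
      have hcard : (G.neighborFinset v).card = d + 1 := by
        rw [G.card_neighborFinset_eq_degree]; exact hv
      calc ∑ u ∈ G.neighborFinset v, ∑ w ∈ G.neighborFinset u, G.degree w
          ≤ (G.neighborFinset v).card * (d ^ 2 + 1) := Finset.sum_le_card_nsmul _ _ _ hu
        _ = (d + 1) * (d ^ 2 + 1) := by rw [hcard]
    · -- v is small
      have hvd : G.degree v ≤ d := by have := hdeg v; omega
      have hu : ∀ u ∈ G.neighborFinset v, ∑ w ∈ G.neighborFinset u, G.degree w
          ≤ d ^ 2 + d + 1 := by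
        intro u _
        by_cases hub : G.degree u = d + 1
        · -- u is big: all its neighbors are small
          have hsum : ∑ w ∈ G.neighborFinset u, G.degree w ≤ (G.neighborFinset u).card * d := by
            refine Finset.sum_le_card_nsmul _ _ _ ?_
            intro w hw
            exact hadj_small ((SimpleGraph.mem_neighborFinset _ _ _).mp hw) hub
          have hcard : (G.neighborFinset u).card = d + 1 := by
            rw [G.card_neighborFinset_eq_degree]; exact hub
          rw [hcard] at hsum
          have : (d + 1) * d ≤ d ^ 2 + d + 1 := by nlinarith
          omega
        · -- u is small: at most one big vertex in N(u)
          have hus : G.degree u ≤ d := by have := hdeg u; omega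
          have := aux_sum_one_exception (G.neighborFinset u) (fun w => G.degree w) d (d + 1)
            (fun w _ => hdeg w)
            (by
              intro w1 hw1 w2 hw2 hb1 hb2
              rw [SimpleGraph.mem_neighborFinset] at hw1 hw2
              by_contra hne
              exact hdist2 hw1.symm hw2 hne (le_antisymm (hdeg w1) (by omega))
                (le_antisymm (hdeg w2) (by omega)))
          rw [G.card_neighborFinset_eq_degree] at this
          have h8 : d * G.degree u ≤ d * d := Nat.mul_le_mul_left _ hus
          have h9 : d * d = d ^ 2 := by ring
          omega
      have hnl : d * (d ^ 2 + d + 1) + 1 ≤ (d + 1) * (d ^ 2 + 1) + d ^ 2 := by nlinarith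
      calc ∑ u ∈ G.neighborFinset v, ∑ w ∈ G.neighborFinset u, G.degree w
          ≤ (G.neighborFinset v).card * (d ^ 2 + d + 1) := Finset.sum_le_card_nsmul _ _ _ hu
        _ = G.degree v * (d ^ 2 + d + 1) := by rw [G.card_neighborFinset_eq_degree]
        _ ≤ d * (d ^ 2 + d + 1) := Nat.mul_le_mul_right _ hvd
        _ ≤ (d + 1) * (d ^ 2 + 1) := by nlinarith
  -- row sums of A^3
  have hrowsum : ∀ v : V, ∑ j, (A * A * A) v j = ((A * A * A) *ᵥ (fun _ => (1 : ℝ))) v := by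
    intro v
    simp [Matrix.mulVec, dotProduct]
  have hones : ∀ v : V, ((A * A * A) *ᵥ (fun _ => (1 : ℝ))) v
      = ∑ u ∈ G.neighborFinset v, ∑ w ∈ G.neighborFinset u, (G.degree w : ℝ) := by
    intro v
    rw [← Matrix.mulVec_mulVec, ← Matrix.mulVec_mulVec]
    rw [hAdef]
    rw [SimpleGraph.adjMatrix_mulVec_apply]
    refine Finset.sum_congr rfl fun u _ => ?_
    rw [SimpleGraph.adjMatrix_mulVec_apply]
    refine Finset.sum_congr rfl fun w _ => ?_
    rw [SimpleGraph.adjMatrix_mulVec_apply]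
    simp [SimpleGraph.card_neighborFinset_eq_degree]
  have hrow : ∀ v : V, ∑ j, (A * A * A) v j ≤ M := by
    intro v
    rw [hrowsum v, hones v]
    have := key v
    have hcast : (∑ u ∈ G.neighborFinset v, ∑ w ∈ G.neighborFinset u, (G.degree w : ℝ))
        = ((∑ u ∈ G.neighborFinset v, ∑ w ∈ G.neighborFinset u, G.degree w : ℕ) : ℝ) := by
      push_cast; rfl
    rw [hcast, hMdef]
    calc ((∑ u ∈ G.neighborFinset v, ∑ w ∈ G.neighborFinset u, G.degree w : ℕ) : ℝ)
        ≤ (((d + 1) * (d ^ 2 + 1) : ℕ) : ℝ) := by exact_mod_cast this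
      _ = ((d : ℝ) + 1) * ((d : ℝ) ^ 2 + 1) := by push_cast; ring
  -- nonnegativity of entries of A and A^3
  have hA0 : ∀ i j : V, 0 ≤ A i j := by
    intro i j
    rw [hAdef]
    simp only [SimpleGraph.adjMatrix_apply]
    split <;> norm_num
  have hA30 : ∀ i j : V, 0 ≤ (A * A * A) i j := by
    intro i j
    rw [Matrix.mul_apply]
    refine Finset.sum_nonneg fun l _ => mul_nonneg ?_ (hA0 l j)
    rw [Matrix.mul_apply]
    exact Finset.sum_nonneg fun k _ => mul_nonneg (hA0 i k) (hA0 k l)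
  -- spectral bound
  have hspec : ∀ μ ∈ spectrum ℝ A, μ ≤ M ^ ((1 : ℝ) / 3) := by
    intro μ hμ
    rw [← AlgEquiv.spectrum_eq (Matrix.toLinAlgEquiv (Pi.basisFun ℝ V))] at hμ
    have hev : Module.End.HasEigenvalue (Matrix.toLin (Pi.basisFun ℝ V) (Pi.basisFun ℝ V) A) μ :=
      Module.End.hasEigenvalue_iff_mem_spectrum.mpr hμ
    obtain ⟨x, hx⟩ := hev.exists_hasEigenvector
    have hxne : x ≠ 0 := hx.right
    have hmul : A *ᵥ x = μ • x := by
      have := hx.apply_eq_smul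
      rwa [Matrix.toLin_eq_toLin', Matrix.toLin'_apply] at this
    have h3 : (A * A * A) *ᵥ x = (μ ^ 3) • x := by
      rw [← Matrix.mulVec_mulVec, ← Matrix.mulVec_mulVec, hmul, Matrix.mulVec_smul, hmul,
        Matrix.mulVec_smul, Matrix.mulVec_smul, hmul, smul_smul, smul_smul]
      ring_nf
    have hVne : Nonempty V := by
      by_contra h
      exact hxne (funext fun v => absurd ⟨v⟩ h)
    obtain ⟨i, -, hi⟩ := Finset.exists_max_image Finset.univ (fun j => |x j|)
      (Finset.univ_nonempty)
    have hxi : 0 < |x i| := by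
      obtain ⟨j, hj⟩ := Function.ne_iff.mp hxne
      have : 0 < |x j| := abs_pos.mpr hj
      exact lt_of_lt_of_le this (hi j (Finset.mem_univ j))
    have hb : |μ ^ 3| * |x i| ≤ M * |x i| := by
      have h1 : |μ ^ 3| * |x i| = |((A * A * A) *ᵥ x) i| := by
        rw [h3]; simp [abs_mul]
      rw [h1]
      have h2 : |((A * A * A) *ᵥ x) i| ≤ ∑ j, (A * A * A) i j * |x j| := by
        rw [Matrix.mulVec, dotProduct]
        refine (Finset.abs_sum_le_sum_abs _ _).trans ?_
        refine Finset.sum_le_sum fun j _ => ?_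
        rw [abs_mul, abs_of_nonneg (hA30 i j)]
      refine h2.trans ?_
      calc ∑ j, (A * A * A) i j * |x j| ≤ ∑ j, (A * A * A) i j * |x i| :=
            Finset.sum_le_sum fun j _ =>
              mul_le_mul_of_nonneg_left (hi j (Finset.mem_univ j)) (hA30 i j)
        _ = (∑ j, (A * A * A) i j) * |x i| := by rw [Finset.sum_mul]
        _ ≤ M * |x i| := mul_le_mul_of_nonneg_right (hrow i) (abs_nonneg _)
    have hb2 : |μ| ^ 3 ≤ M := by
      have := (mul_le_mul_iff_of_pos_right hxi).mp hb
      rwa [abs_pow] at this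
    have habs : |μ| ≤ M ^ ((1 : ℝ) / 3) := by
      have h1 : |μ| = (|μ| ^ (3 : ℕ)) ^ ((1 : ℝ) / 3) := by
        rw [← Real.rpow_natCast |μ| 3, ← Real.rpow_mul (abs_nonneg μ)]
        norm_num
      rw [h1]
      exact Real.rpow_le_rpow (by positivity) hb2 (by norm_num)
    exact (le_abs_self μ).trans habs
  have hfinal : specRad G = sSup (spectrum ℝ A) := rfl
  rw [hfinal]
  exact Real.sSup_le hspec (by positivity)
end

section
/- Let H be a connected finite simple graph on n vertices whose maximum degree equals d and which is not d-regular. Then ρ(H) ≤ √((d − n⁻²)·Δ(H)). -/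
open Finset SimpleGraph Matrix

section Aux

lemma walk_tele' {V : Type*} {G : SimpleGraph V} (f : V → ℝ) {a b : V} (p : G.Walk a b) :
    (p.darts.map (fun d => f d.toProd.1 - f d.toProd.2)).sum = f a - f b := by
  induction p with
  | nil => simp
  | cons h q ih => simp only [SimpleGraph.Walk.darts_cons, List.map_cons, List.sum_cons, ih]; ring

lemma list_cs' : ∀ l : List ℝ, l.sum ^ 2 ≤ l.length * (l.map (· ^ 2)).sum := by
  intro l
  induction l with
  | nil => simp
  | cons a l ih =>
    have hT : 0 ≤ (l.map (· ^ 2)).sum :=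
      List.sum_nonneg (by intro x hx; simp at hx; obtain ⟨y, _, rfl⟩ := hx; positivity)
    rcases eq_or_ne l [] with rfl | hne
    · simp
    · have hL : (1:ℝ) ≤ (l.length : ℝ) := by
        have := List.length_pos_iff.mpr hne
        exact_mod_cast this
      simp only [List.sum_cons, List.map_cons, List.length_cons]
      push_cast
      nlinarith [sq_nonneg ((l.length:ℝ) * a - l.sum), ih, hT, hL,
        mul_nonneg (le_trans zero_le_one hL) hT]

lemma spec_eigvec' {V : Type*} [Fintype V] [DecidableEq V] [Nonempty V]
    (A : Matrix V V ℝ) (hA : A.IsHermitian) :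
    ∃ x : V → ℝ, x ≠ 0 ∧ A *ᵥ x = sSup (spectrum ℝ A) • x := by
  classical
  have hne : (spectrum ℝ A).Nonempty :=
    ⟨hA.eigenvalues (Classical.arbitrary V), hA.eigenvalues_mem_spectrum_real _⟩
  have hfin : (spectrum ℝ A).Finite := A.finite_spectrum
  have hmem : sSup (spectrum ℝ A) ∈ spectrum ℝ A := hne.csSup_mem hfin
  have hspec : spectrum ℝ (Matrix.toLin' A) = spectrum ℝ A := by
    rw [← Matrix.toLin_eq_toLin']
    exact AlgEquiv.spectrum_eq (Matrix.toLinAlgEquiv (Pi.basisFun ℝ V)) A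
  have hev : Module.End.HasEigenvalue (Matrix.toLin' A) (sSup (spectrum ℝ A)) := by
    rw [Module.End.hasEigenvalue_iff_mem_spectrum, hspec]; exact hmem
  obtain ⟨x, hx⟩ := hev.exists_hasEigenvector
  refine ⟨x, hx.right, ?_⟩
  have := hx.apply_eq_smul
  rwa [Matrix.toLin'_apply] at this

-- swap over neighbors
lemma nbr_swap {V : Type*} [Fintype V] [DecidableEq V] (H : SimpleGraph V)
    [DecidableRel H.Adj] (g : V → ℝ) :
    ∑ v, ∑ u ∈ H.neighborFinset v, g u = ∑ v, (H.degree v : ℝ) * g v := by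
  have h1 : ∀ v, ∑ u ∈ H.neighborFinset v, g u
      = ∑ u, if H.Adj v u then g u else 0 := by
    intro v; rw [neighborFinset_eq_filter, Finset.sum_filter]
  have h2 : ∀ u, ∑ v, (if H.Adj v u then g u else 0)
      = (H.degree u : ℝ) * g u := by
    intro u
    have : ∑ v, (if H.Adj v u then g u else 0) = ∑ v ∈ H.neighborFinset u, g u := by
      rw [neighborFinset_eq_filter, Finset.sum_filter]
      apply Finset.sum_congr rfl
      intro v _
      simp [adj_comm]
    rw [this, Finset.sum_const, card_neighborFinset_eq_degree]
    simp [mul_comm]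
  simp_rw [h1]
  rw [Finset.sum_comm]
  simp_rw [h2]

end Aux

section Doubling

variable {V : Type*} [Fintype V] [DecidableEq V] {H : SimpleGraph V} [DecidableRel H.Adj]

lemma path_double (y : V → ℝ) {a b : V} (p : H.Walk a b) (hp : p.IsPath) :
    2 * ((p.darts.map (fun d => (y d.toProd.1 - y d.toProd.2) ^ 2)).sum)
      ≤ ∑ v, ∑ u ∈ H.neighborFinset v, (y v - y u) ^ 2 := by
  classical
  set F : H.Dart → ℝ := fun d => (y d.toProd.1 - y d.toProd.2) ^ 2 with hF
  have he : p.edges = p.darts.map SimpleGraph.Dart.edge := rfl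
  have hedges : (p.darts.map SimpleGraph.Dart.edge).Nodup := by
    rw [← he]; exact hp.isTrail.edges_nodup
  have hndD : p.darts.Nodup := hedges.of_map
  have hinj := List.inj_on_of_nodup_map hedges
  set L : List H.Dart := p.darts ++ p.darts.map SimpleGraph.Dart.symm with hL
  have hLnd : L.Nodup := by
    rw [hL]
    refine List.Nodup.append hndD (hndD.map SimpleGraph.Dart.symm_involutive.injective) ?_
    intro d hd hd'
    obtain ⟨d', hmem, heq⟩ := List.mem_map.mp hd'
    subst heq
    have : d'.symm = d' := hinj hd hmem (SimpleGraph.Dart.edge_symm d')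
    exact SimpleGraph.Dart.symm_ne d' this
  have hFsymm : ∀ d : H.Dart, F d.symm = F d := by
    intro d; simp only [hF, SimpleGraph.Dart.symm_toProd, Prod.fst_swap, Prod.snd_swap]; ring
  have hsumL : (L.map F).sum = 2 * (p.darts.map F).sum := by
    rw [hL, List.map_append, List.sum_append, List.map_map]
    have : F ∘ SimpleGraph.Dart.symm = F := funext hFsymm
    rw [this]; ring
  have hsumFin : (L.map F).sum = ∑ d ∈ L.toFinset, F d := (List.sum_toFinset F hLnd).symm
  have himg : ∑ d ∈ L.toFinset, F d
      = ∑ q ∈ L.toFinset.image SimpleGraph.Dart.toProd, (y q.1 - y q.2) ^ 2 := by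
    rw [Finset.sum_image (fun x _ y _ h => SimpleGraph.Dart.toProd_injective h)]
  have hadj : ∀ q ∈ L.toFinset.image SimpleGraph.Dart.toProd, H.Adj q.1 q.2 := by
    intro q hq
    obtain ⟨d, _, rfl⟩ := Finset.mem_image.mp hq
    exact d.adj
  have hle : ∑ q ∈ L.toFinset.image SimpleGraph.Dart.toProd, (y q.1 - y q.2) ^ 2
      ≤ ∑ q : V × V, (if H.Adj q.1 q.2 then (y q.1 - y q.2) ^ 2 else 0) := by
    calc ∑ q ∈ L.toFinset.image SimpleGraph.Dart.toProd, (y q.1 - y q.2) ^ 2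
        = ∑ q ∈ L.toFinset.image SimpleGraph.Dart.toProd,
            (if H.Adj q.1 q.2 then (y q.1 - y q.2) ^ 2 else 0) := by
          apply Finset.sum_congr rfl; intro q hq; rw [if_pos (hadj q hq)]
      _ ≤ _ := by
          apply Finset.sum_le_sum_of_subset_of_nonneg (Finset.subset_univ _)
          intro q _ _; positivity
  have hfinal : ∑ q : V × V, (if H.Adj q.1 q.2 then (y q.1 - y q.2) ^ 2 else 0)
      = ∑ v, ∑ u ∈ H.neighborFinset v, (y v - y u) ^ 2 := by
    rw [Fintype.sum_prod_type]
    apply Finset.sum_congr rfl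
    intro v _
    rw [neighborFinset_eq_filter, Finset.sum_filter]
  linarith [hsumL, hsumFin, himg, hle, hfinal,
    le_of_eq (hsumL.symm.trans (hsumFin.trans himg))]

end Doubling

section Key

lemma key_bound {V : Type*} [Fintype V] [DecidableEq V] (H : SimpleGraph V)
    [DecidableRel H.Adj] (hconn : H.Connected) {w : V}
    (hw : H.degree w < H.maxDegree) :
    sSup (spectrum ℝ (H.adjMatrix ℝ)) ≤ (H.maxDegree : ℝ) - ((Fintype.card V : ℝ) ^ 2)⁻¹ := by
  classical
  haveI : Nonempty V := hconn.nonempty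
  set n : ℕ := Fintype.card V with hn
  set Δ : ℝ := (H.maxDegree : ℝ) with hΔ
  set ρ : ℝ := sSup (spectrum ℝ (H.adjMatrix ℝ)) with hρ
  -- n ≥ 2
  obtain ⟨v₀, hv₀⟩ := H.exists_maximal_degree_vertex
  have hv₀w : v₀ ≠ w := by
    intro h; rw [h] at hv₀; omega
  have hn2 : 2 ≤ n := by
    rw [hn]
    have : Nontrivial V := ⟨⟨v₀, w, hv₀w⟩⟩
    exact Fintype.one_lt_card
  have hn2R : (2:ℝ) ≤ (n:ℝ) := by exact_mod_cast hn2
  -- eigenvector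
  have hA : (H.adjMatrix ℝ).IsHermitian := by
    rw [Matrix.IsHermitian, Matrix.conjTranspose_eq_transpose_of_trivial]
    exact H.isSymm_adjMatrix
  obtain ⟨x, hx0, heig⟩ := spec_eigvec' (H.adjMatrix ℝ) hA
  set y : V → ℝ := fun v => |x v| with hy
  set s : ℝ := ∑ v, y v ^ 2 with hsdef
  have hynn : ∀ v, 0 ≤ y v := fun v => abs_nonneg _
  have hs : 0 < s := by
    obtain ⟨v, hv⟩ := Function.ne_iff.mp hx0
    apply Finset.sum_pos' (fun v _ => by positivity)
    exact ⟨v, Finset.mem_univ v, by simp only [hy]; exact pow_pos (abs_pos.mpr hv) 2⟩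
  have hrow : ∀ v, ∑ u ∈ H.neighborFinset v, x u = ρ * x v := by
    intro v
    have := congrFun heig v
    rwa [SimpleGraph.adjMatrix_mulVec_apply, Pi.smul_apply, smul_eq_mul] at this
  set Q : ℝ := ∑ v, ∑ u ∈ H.neighborFinset v, y v * y u with hQdef
  have hQ : ρ * s ≤ Q := by
    have h1 : ρ * s = ∑ v, x v * ∑ u ∈ H.neighborFinset v, x u := by
      simp_rw [hrow, hsdef, Finset.mul_sum]
      apply Finset.sum_congr rfl
      intro v _
      simp only [hy, sq_abs]; ring
    rw [h1, hQdef]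
    apply Finset.sum_le_sum
    intro v _
    calc x v * ∑ u ∈ H.neighborFinset v, x u
        ≤ |x v * ∑ u ∈ H.neighborFinset v, x u| := le_abs_self _
      _ = y v * |∑ u ∈ H.neighborFinset v, x u| := by rw [abs_mul]
      _ ≤ y v * ∑ u ∈ H.neighborFinset v, y u := by
          apply mul_le_mul_of_nonneg_left _ (hynn v)
          exact (Finset.abs_sum_le_sum_abs _ _)
      _ = ∑ u ∈ H.neighborFinset v, y v * y u := Finset.mul_sum _ _ _
  set T : ℝ := ∑ v, ∑ u ∈ H.neighborFinset v, (y v - y u) ^ 2 with hTdef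
  have hT : T = 2 * (∑ v, (H.degree v : ℝ) * y v ^ 2) - 2 * Q := by
    have expand : ∀ v, ∑ u ∈ H.neighborFinset v, (y v - y u) ^ 2
        = (H.degree v : ℝ) * y v ^ 2 - 2 * ∑ u ∈ H.neighborFinset v, y v * y u
          + ∑ u ∈ H.neighborFinset v, y u ^ 2 := by
      intro v
      have : ∀ u, (y v - y u) ^ 2 = y v ^ 2 - 2 * (y v * y u) + y u ^ 2 := by intro u; ring
      simp_rw [this]
      rw [Finset.sum_add_distrib, Finset.sum_sub_distrib, Finset.sum_const,
        SimpleGraph.card_neighborFinset_eq_degree, ← Finset.mul_sum, nsmul_eq_mul]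
    simp_rw [hTdef, expand]
    rw [Finset.sum_add_distrib, Finset.sum_sub_distrib, nbr_swap H (fun v => y v ^ 2)]
    rw [hQdef, ← Finset.sum_sub_distrib]
    rw [Finset.mul_sum, Finset.mul_sum]
    rw [← Finset.sum_add_distrib, ← Finset.sum_sub_distrib]
    apply Finset.sum_congr rfl
    intro v _
    ring
  have hdegle : ∀ v, (H.degree v : ℝ) ≤ Δ := by
    intro v; rw [hΔ]; exact_mod_cast H.degree_le_maxDegree v
  have hD : y w ^ 2 ≤ ∑ v, (Δ - (H.degree v : ℝ)) * y v ^ 2 := by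
    have hwlt : (H.degree w : ℝ) + 1 ≤ Δ := by rw [hΔ]; exact_mod_cast hw
    calc y w ^ 2 ≤ (Δ - (H.degree w : ℝ)) * y w ^ 2 := by nlinarith [sq_nonneg (y w)]
      _ ≤ ∑ v, (Δ - (H.degree v : ℝ)) * y v ^ 2 := by
          apply Finset.single_le_sum (f := fun v => (Δ - (H.degree v : ℝ)) * y v ^ 2)
            (fun v _ => mul_nonneg (by linarith [hdegle v]) (sq_nonneg _)) (Finset.mem_univ w)
  have hkey : Δ * s - Q = (∑ v, (Δ - (H.degree v : ℝ)) * y v ^ 2) + T / 2 := by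
    have h1 : ∑ v, (Δ - (H.degree v : ℝ)) * y v ^ 2
        = Δ * s - ∑ v, (H.degree v : ℝ) * y v ^ 2 := by
      rw [hsdef, Finset.mul_sum, ← Finset.sum_sub_distrib]
      apply Finset.sum_congr rfl
      intro v _; ring
    rw [h1]
    linarith [hT]
  -- max vertex
  obtain ⟨u₀, _, hu₀⟩ := Finset.exists_max_image Finset.univ y Finset.univ_nonempty
  have hsn : s ≤ (n : ℝ) * y u₀ ^ 2 := by
    calc s ≤ ∑ _v : V, y u₀ ^ 2 :=
          Finset.sum_le_sum (fun v _ => by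
            have := hu₀ v (Finset.mem_univ v)
            nlinarith [hynn v, hynn u₀])
      _ = (n : ℝ) * y u₀ ^ 2 := by
          rw [Finset.sum_const, nsmul_eq_mul, Finset.card_univ, hn]
  -- path
  obtain ⟨p, hp⟩ : ∃ p : H.Walk u₀ w, p.IsPath := by
    obtain ⟨q⟩ := hconn.preconnected u₀ w
    exact ⟨q.toPath, q.toPath.2⟩
  set P : ℝ := ((p.darts.map (fun d => (y d.toProd.1 - y d.toProd.2) ^ 2)).sum) with hPdef
  have hP0 : 0 ≤ P := by
    apply List.sum_nonneg
    intro z hz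
    simp only [List.mem_map] at hz
    obtain ⟨d, _, rfl⟩ := hz
    positivity
  have hlen : (p.length : ℝ) ≤ (n : ℝ) - 1 := by
    have := hp.length_lt
    rw [← hn] at this
    have : p.length + 1 ≤ n := this
    have : ((p.length + 1 : ℕ) : ℝ) ≤ (n : ℝ) := by exact_mod_cast this
    push_cast at this
    linarith
  have hCS : (y u₀ - y w) ^ 2 ≤ ((n:ℝ) - 1) * P := by
    have h1 := list_cs' (p.darts.map (fun d => y d.toProd.1 - y d.toProd.2))
    rw [walk_tele' y p, List.map_map, List.length_map] at h1
    have h2 : ((fun x => x ^ 2) ∘ fun d : H.Dart => y d.toProd.1 - y d.toProd.2)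
        = fun d : H.Dart => (y d.toProd.1 - y d.toProd.2) ^ 2 := rfl
    rw [h2] at h1
    rw [SimpleGraph.Walk.length_darts] at h1
    calc (y u₀ - y w) ^ 2 ≤ (p.length : ℝ) * P := h1
      _ ≤ ((n:ℝ) - 1) * P := mul_le_mul_of_nonneg_right hlen hP0
  have h2P : 2 * P ≤ T := path_double y p hp
  clear_value n Δ ρ y s Q T P
  clear hPdef hlen hp hTdef hQdef hsdef hy hρ hΔ hn heig hrow hA hx0 hu₀ hv₀ hv₀w hynn hdegle hT hn2 hw p x
  -- combine
  have hmain : s / (n:ℝ) ^ 2 ≤ Δ * s - Q := by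
    have ha : s / (n:ℝ) ≤ y u₀ ^ 2 := by
      rw [div_le_iff₀ (by linarith)]
      linarith [hsn]
    have hmin : y u₀ ^ 2 / (n:ℝ) ≤ y w ^ 2 + P := by
      have hnpos : (0:ℝ) < (n:ℝ) * ((n:ℝ) - 1) := by nlinarith
      rw [div_le_iff₀ (by linarith)]
      nlinarith [sq_nonneg ((n:ℝ) * y w - y u₀), hCS, hn2R, hP0]
    have hstep : s / (n:ℝ) ^ 2 ≤ y w ^ 2 + P := by
      have h1 : s / (n:ℝ) ^ 2 = (s / (n:ℝ)) / (n:ℝ) := by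
        rw [div_div]; ring_nf
      have h2 : (s / (n:ℝ)) / (n:ℝ) ≤ y u₀ ^ 2 / (n:ℝ) :=
        (div_le_div_iff_of_pos_right (by linarith)).mpr ha
      linarith
    linarith [hD, h2P, hkey, hstep]
  -- conclude
  have hfin : ((n:ℝ)^2)⁻¹ * s ≤ (Δ - ρ) * s := by
    have : s / (n:ℝ)^2 ≤ (Δ - ρ) * s := by
      have hQ' : Δ * s - Q ≤ (Δ - ρ) * s := by nlinarith [hQ]
      linarith [hmain]
    calc ((n:ℝ)^2)⁻¹ * s = s / (n:ℝ)^2 := by rw [div_eq_mul_inv]; ring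
      _ ≤ (Δ - ρ) * s := this
  have := (mul_le_mul_iff_of_pos_right hs).mp hfin
  linarith

end Key

/-- A connected graph on n vertices with maximum degree d that is not d-regular satisfies
ρ(H) ≤ √((d − n⁻²)·Δ(H)). -/
theorem stmt17 {V : Type*} [Fintype V] [DecidableEq V] (H : SimpleGraph V)
    (hconn : H.Connected) (n d : ℕ) (hn : Fintype.card V = n) (hd : maxDeg H = d)
    (hreg : ¬ ∀ v : V, deg H v = d) :
    specRad H ≤ Real.sqrt (((d : ℝ) - ((n : ℝ) ^ 2)⁻¹) * (maxDeg H : ℝ)) := by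
  classical
  haveI : Nonempty V := hconn.nonempty
  have hspec : specRad H = sSup (spectrum ℝ (H.adjMatrix ℝ)) := rfl
  have hmax : maxDeg H = H.maxDegree := rfl
  have hdeg : ∀ v, deg H v = H.degree v := fun _ => rfl
  push_neg at hreg
  obtain ⟨w, hw⟩ := hreg
  rw [hdeg] at hw
  have hwd : H.degree w < H.maxDegree := by
    have h1 : H.degree w ≤ H.maxDegree := H.degree_le_maxDegree w
    rw [hmax] at hd
    omega
  have hk := key_bound H hconn hwd
  rw [← hspec, hn, hmax.symm.trans hd] at hk
  -- now hk : specRad H ≤ (d:ℝ) - ((n:ℝ)^2)⁻¹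
  rw [hd]
  rcases le_or_gt (specRad H) 0 with h0 | h0
  · exact le_trans h0 (Real.sqrt_nonneg _)
  · rw [Real.le_sqrt h0.le]
    have hinv : (0:ℝ) ≤ ((n:ℝ)^2)⁻¹ := by positivity
    nlinarith [hk, h0]
    exact mul_nonneg (by linarith) (Nat.cast_nonneg d)
end
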